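/- arXiv:2301.06742 — 8 statements merged into one kernel-verified Lean document; each statement's English description precedes it below -/
import Mathlib

section
/- There exists a constant C > 0 such that |x_N| ≤ C·γ̄^{N/(2q)} for all N ∈ ℕ, where the exponent is a real power. (This is the geometric-decay estimate for the recursively defined coefficients γ_1^{(N)} used in the proof of Proposition 1.) -/
/-- Geometric decay of solutions of the linear recurrence
`x N = ∑ₖ γₖ x_{N-k}` when `∑ₖ |γₖ| < 1`. -/
theorem stmt_1 (q : ℕ) (hq : 1 ≤ q) (γ : ℕ → ℝ)
    (γbar : ℝ) (hγbar : γbar = ∑ i ∈ Finset.Icc 1 q, |γ i|)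
    (hγ0 : 0 < γbar) (hγ1 : γbar < 1)
    (x : ℕ → ℝ)
    (hrec : ∀ N, q ≤ N → x N = ∑ k ∈ Finset.Icc 1 q, γ k * x (N - k)) :
    ∃ C > (0:ℝ), ∀ N : ℕ, |x N| ≤ C * γbar ^ ((N : ℝ) / (2 * q)) := by
  set M : ℝ := 1 + ∑ j ∈ Finset.range q, |x j| with hM
  have hsum0 : 0 ≤ ∑ j ∈ Finset.range q, |x j| :=
    Finset.sum_nonneg fun _ _ => abs_nonneg _
  have hM1 : 1 ≤ M := by simp only [hM]; linarith
  have hγnn : 0 ≤ γbar := hγ0.le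
  have key : ∀ N, |x N| ≤ M * γbar ^ (N / q) := by
    intro N
    induction N using Nat.strong_induction_on with
    | _ N ih =>
      by_cases h : N < q
      · have hd : N / q = 0 := Nat.div_eq_of_lt h
        rw [hd, pow_zero, mul_one]
        have hle : |x N| ≤ ∑ j ∈ Finset.range q, |x j| :=
          Finset.single_le_sum (fun j _ => abs_nonneg (x j)) (Finset.mem_range.mpr h)
        linarith
      · push_neg at h
        have h1 : 1 ≤ N / q := (Nat.one_le_div_iff (by omega)).mpr h
        have hdd : (N / q - 1) * q ≤ N - q := by
          have h3 : N / q * q ≤ N := Nat.div_mul_le_self N q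
          have h4 : (N / q - 1) * q = N / q * q - q := by rw [Nat.sub_mul, one_mul]
          omega
        have hdivq : N / q - 1 ≤ (N - q) / q := (Nat.le_div_iff_mul_le (by omega)).mpr hdd
        rw [hrec N h]
        calc |∑ k ∈ Finset.Icc 1 q, γ k * x (N - k)|
            ≤ ∑ k ∈ Finset.Icc 1 q, |γ k * x (N - k)| := Finset.abs_sum_le_sum_abs _ _
          _ ≤ ∑ k ∈ Finset.Icc 1 q, |γ k| * (M * γbar ^ (N / q - 1)) := by
              apply Finset.sum_le_sum
              intro k hk
              rw [abs_mul]
              apply mul_le_mul_of_nonneg_left _ (abs_nonneg _)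
              obtain ⟨hk1, hk2⟩ := Finset.mem_Icc.mp hk
              have hlt : N - k < N := by omega
              have hdiv : N / q - 1 ≤ (N - k) / q :=
                le_trans hdivq (Nat.div_le_div_right (by omega))
              calc |x (N - k)| ≤ M * γbar ^ ((N - k) / q) := ih _ hlt
                _ ≤ M * γbar ^ (N / q - 1) := by
                    apply mul_le_mul_of_nonneg_left _ (by linarith)
                    exact pow_le_pow_of_le_one hγnn hγ1.le hdiv
          _ = γbar * (M * γbar ^ (N / q - 1)) := by rw [← Finset.sum_mul, hγbar]
          _ = M * (γbar * γbar ^ (N / q - 1)) := by ring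
          _ = M * γbar ^ (N / q) := by
              have hee : γbar ^ (N / q) = γbar * γbar ^ (N / q - 1) := by
                conv_lhs => rw [show N / q = 1 + (N / q - 1) from by omega]
                rw [pow_add, pow_one]
              rw [hee]
  refine ⟨M / γbar, by positivity, fun N => ?_⟩
  have hq0r : (0:ℝ) < q := by exact_mod_cast Nat.lt_of_lt_of_le Nat.zero_lt_one hq
  have hcast : (N : ℝ) / (2 * q) - 1 ≤ ((N / q : ℕ) : ℝ) := by
    have hmod := Nat.div_add_mod N q
    have hmlt : N % q < q := Nat.mod_lt N (by omega)
    have hr : (N : ℝ) = (q : ℝ) * ((N / q : ℕ) : ℝ) + ((N % q : ℕ) : ℝ) := by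
      exact_mod_cast hmod.symm
    have hr2 : ((N % q : ℕ) : ℝ) < (q : ℝ) := by exact_mod_cast hmlt
    have h5 : (N : ℝ) / q ≤ ((N / q : ℕ) : ℝ) + 1 := by
      rw [div_le_iff₀ hq0r]; nlinarith
    have h6 : (N : ℝ) / (2 * q) ≤ (N : ℝ) / q := by
      apply div_le_div_of_nonneg_left (by positivity) hq0r
      linarith
    linarith
  have hrw : (M / γbar) * γbar ^ ((N : ℝ) / (2 * q)) = M * γbar ^ ((N : ℝ) / (2 * q) - 1) := by
    rw [Real.rpow_sub hγ0, Real.rpow_one]; ring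
  rw [hrw]
  calc |x N| ≤ M * γbar ^ (N / q) := key N
    _ = M * γbar ^ (((N / q : ℕ) : ℝ)) := by rw [Real.rpow_natCast]
    _ ≤ M * γbar ^ ((N : ℝ) / (2 * q) - 1) := by
        apply mul_le_mul_of_nonneg_left _ (by linarith)
        exact Real.rpow_le_rpow_of_exponent_ge hγ0 hγ1.le hcast
end

section
/- For every integer N ≥ 2, Σ_{i=1}^q γ_i^{(1)} − Σ_{i=1}^q γ_i^{(N)} = (1 − Σ_{i=1}^q γ_i)·Σ_{k=1}^{N−1} γ_1^{(k)}. (This telescoping identity for the recursively defined coefficients is used in the proof of Proposition 1.) -/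
/-- Telescoping identity for the recursively defined
coefficients `γᵢ⁽ᴺ⁾` from the proof of Proposition 1: here `g N i = γᵢ⁽ᴺ⁾`. -/
theorem stmt_2 (q : ℕ) (hq : 1 ≤ q) (γ : ℕ → ℝ)
    (g : ℕ → ℕ → ℝ)
    (hconv : ∀ M, g M (q + 1) = 0)
    (hrec : ∀ N, 2 ≤ N → ∀ i, 1 ≤ i → i ≤ q →
      g N i = g (N - 1) 1 * γ i + g (N - 1) (i + 1)) :
    ∀ N, 2 ≤ N →
      (∑ i ∈ Finset.Icc 1 q, g 1 i) - (∑ i ∈ Finset.Icc 1 q, g N i)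
        = (1 - ∑ i ∈ Finset.Icc 1 q, γ i) * (∑ k ∈ Finset.Icc 1 (N - 1), g k 1) := by
  have key : ∀ N, 2 ≤ N →
      (∑ i ∈ Finset.Icc 1 q, g (N - 1) i) - (∑ i ∈ Finset.Icc 1 q, g N i)
        = (1 - ∑ i ∈ Finset.Icc 1 q, γ i) * g (N - 1) 1 := by
    intro N hN
    have h1 : (∑ i ∈ Finset.Icc 1 q, g N i)
        = g (N - 1) 1 * (∑ i ∈ Finset.Icc 1 q, γ i)
          + ∑ i ∈ Finset.Icc 1 q, g (N - 1) (i + 1) := by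
      rw [Finset.mul_sum, ← Finset.sum_add_distrib]
      exact Finset.sum_congr rfl fun i hi => by
        rw [Finset.mem_Icc] at hi
        exact hrec N hN i hi.1 hi.2
    have h2 : (∑ i ∈ Finset.Icc 1 q, g (N - 1) (i + 1))
        = (∑ i ∈ Finset.Icc 1 q, g (N - 1) i) - g (N - 1) 1 := by
      have hshift : (∑ i ∈ Finset.Icc 1 q, g (N - 1) (i + 1))
          = ∑ i ∈ Finset.Ioc 1 (q + 1), g (N - 1) i := by
        rw [← Finset.Icc_add_one_left_eq_Ioc]
        rw [← Finset.map_add_right_Icc 1 q 1]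
        rw [Finset.sum_map]
        rfl
      have hins : (∑ i ∈ Finset.Icc 1 (q + 1), g (N - 1) i)
          = g (N - 1) 1 + ∑ i ∈ Finset.Ioc 1 (q + 1), g (N - 1) i := by
        rw [Finset.Icc_eq_cons_Ioc (by omega), Finset.sum_cons]
      have htop : (∑ i ∈ Finset.Icc 1 (q + 1), g (N - 1) i)
          = (∑ i ∈ Finset.Icc 1 q, g (N - 1) i) + g (N - 1) (q + 1) :=
        Finset.sum_Icc_succ_top (by omega) _
      rw [hconv] at htop
      rw [hshift]
      linarith
    rw [h1, h2]; ring
  intro N hN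
  induction N, hN using Nat.le_induction with
  | base =>
      have h := key 2 le_rfl
      simpa using h
  | succ n hn ih =>
      have hkey := key (n + 1) (by omega)
      simp only [Nat.add_sub_cancel] at hkey ⊢
      have hsum : ∑ k ∈ Finset.Icc 1 n, g k 1
          = (∑ k ∈ Finset.Icc 1 (n - 1), g k 1) + g n 1 := by
        have h := Finset.sum_Icc_succ_top (a := 1) (b := n - 1) (by omega)
          (fun k => g k 1)
        rw [show n - 1 + 1 = n from by omega] at h
        exact h
      have hih := ih
      rw [hsum, mul_add]
      linarith
end

section
/- For every integer j ≥ 1, A_j − Σ_{k=1}^{min(j−1, q)} γ_k·A_{j−k} = 1_{j ≤ q}·γ_j·g_{−1}·α_1 + (g_0 − γ_1·g_{−1})·α_j + g_{−1}·α_{j+1}. In particular, the left-hand side vanishes for all j ≥ (p∨q)+1, and, upon taking g_{−1} = 2ϱ_3 and g_0 = ϱ_1 − ϱ_2 + 2ϱ_3·γ_1, it equals the DR Beta coefficient α_j^g = 1_{j ≤ q}·2ϱ_3·γ_j·α_1 + 1_{j ≤ p}·(ϱ_1 − ϱ_2)·α_j + 1_{j ≤ p−1}·2ϱ_3·α_{j+1}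 of Proposition 1(a). -/
/-- The coefficient identity behind Proposition 1(a):
`A j − ∑_{k=1}^{min(j−1,q)} γ_k A_{j−k}` equals a three-term expression, vanishes
for `j ≥ (p∨q)+1`, and specializes to the DR Beta coefficient `α_j^g`. -/
theorem stmt_3 (p q : ℤ) (hp : 1 ≤ p) (hq : 1 ≤ q)
    (γ α : ℤ → ℝ)
    (hγ : ∀ k : ℤ, q < k ∨ k ≤ 0 → γ k = 0)
    (hα : ∀ s : ℤ, p < s ∨ s ≤ 0 → α s = 0)
    (g : ℤ → ℝ)
    (hg0 : ∀ m : ℤ, m ≤ -2 → g m = 0)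
    (hgrec : ∀ m : ℤ, 1 ≤ m → g m = ∑ k ∈ Finset.Icc 1 q, γ k * g (m - k))
    (A : ℤ → ℝ) (hA : ∀ j, A j = ∑ s ∈ Finset.Icc 1 p, g (j - s) * α s) :
    (∀ j : ℤ, 1 ≤ j →
      A j - (∑ k ∈ Finset.Icc 1 (min (j - 1) q), γ k * A (j - k))
        = (if j ≤ q then γ j * g (-1) * α 1 else 0)
          + (g 0 - γ 1 * g (-1)) * α j + g (-1) * α (j + 1))
    ∧ (∀ j : ℤ, max p q + 1 ≤ j →
        A j - (∑ k ∈ Finset.Icc 1 (min (j - 1) q), γ k * A (j - k)) = 0)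
    ∧ (∀ ϱ1 ϱ2 ϱ3 : ℝ, g (-1) = 2 * ϱ3 → g 0 = ϱ1 - ϱ2 + 2 * ϱ3 * γ 1 →
        ∀ j : ℤ, 1 ≤ j →
          (if j ≤ q then γ j * g (-1) * α 1 else 0)
            + (g 0 - γ 1 * g (-1)) * α j + g (-1) * α (j + 1)
          = (if j ≤ q then 2 * ϱ3 * γ j * α 1 else 0)
            + (if j ≤ p then (ϱ1 - ϱ2) * α j else 0)
            + (if j ≤ p - 1 then 2 * ϱ3 * α (j + 1) else 0)) := by
  -- The key evaluation lemma
  have D : ∀ j m : ℤ, 1 ≤ j → m ≤ j - 1 →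
      g m - ∑ k ∈ Finset.Icc 1 (min (j - 1) q), γ k * g (m - k)
        = (if j ≤ q ∧ m = j - 1 then γ j * g (-1) else 0)
          + (if m = 0 then g 0 - γ 1 * g (-1) else 0)
          + (if m = -1 then g (-1) else 0) := by
    intro j m hj hm
    rcases (show m ≤ -2 ∨ m = -1 ∨ m = 0 ∨ 1 ≤ m by omega) with hm2 | rfl | rfl | hm1
    · have c1 : ¬(j ≤ q ∧ m = j - 1) := by omega
      have c2 : ¬(m = 0) := by omega
      have c3 : ¬(m = -1) := by omega
      rw [hg0 m hm2, if_neg c1, if_neg c2, if_neg c3, Finset.sum_eq_zero]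
      · ring
      · intro k hk
        simp only [Finset.mem_Icc] at hk
        rw [hg0 (m - k) (by omega), mul_zero]
    · have c1 : ¬(j ≤ q ∧ (-1 : ℤ) = j - 1) := by omega
      have c2 : ¬((-1 : ℤ) = 0) := by omega
      rw [if_neg c1, if_neg c2, if_pos rfl, Finset.sum_eq_zero]
      · ring
      · intro k hk
        simp only [Finset.mem_Icc] at hk
        rw [hg0 (-1 - k) (by omega), mul_zero]
    · have c3 : ¬((0 : ℤ) = -1) := by omega
      rw [if_neg c3, if_pos rfl]
      rcases (show j = 1 ∨ 2 ≤ j by omega) with rfl | hj2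
      · rw [if_pos (⟨hq, by norm_num⟩ : (1 : ℤ) ≤ q ∧ (0 : ℤ) = 1 - 1)]
        rw [show min ((1 : ℤ) - 1) q = 0 by omega, Finset.Icc_eq_empty (by omega),
          Finset.sum_empty]
        ring
      · have c1 : ¬(j ≤ q ∧ (0 : ℤ) = j - 1) := by omega
        rw [if_neg c1, Finset.sum_eq_single_of_mem 1
          (by simp only [Finset.mem_Icc]; omega)]
        · norm_num
        · intro b hb hb1
          simp only [Finset.mem_Icc] at hb
          rw [hg0 (0 - b) (by omega), mul_zero]
    · have c2 : ¬(m = 0) := by omega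
      have c3 : ¬(m = -1) := by omega
      rw [if_neg c2, if_neg c3, hgrec m hm1]
      have hunion : Finset.Icc 1 q
          = Finset.Icc 1 (min (j - 1) q) ∪ Finset.Ioc (min (j - 1) q) q := by
        ext x
        simp only [Finset.mem_Icc, Finset.mem_Ioc, Finset.mem_union]
        omega
      have hdisj : Disjoint (Finset.Icc 1 (min (j - 1) q))
          (Finset.Ioc (min (j - 1) q) q) := by
        rw [Finset.disjoint_left]
        intro x hx hx'
        simp only [Finset.mem_Icc] at hx
        simp only [Finset.mem_Ioc] at hx'
        omega
      rw [hunion, Finset.sum_union hdisj]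
      have hR : ∑ k ∈ Finset.Ioc (min (j - 1) q) q, γ k * g (m - k)
          = if j ≤ q ∧ m = j - 1 then γ j * g (-1) else 0 := by
        by_cases h : j ≤ q ∧ m = j - 1
        · obtain ⟨hjq, hmj⟩ := h
          rw [if_pos ⟨hjq, hmj⟩, Finset.sum_eq_single_of_mem j
            (by simp only [Finset.mem_Ioc]; omega)]
          · rw [hmj, show j - 1 - j = (-1 : ℤ) by ring]
          · intro b hb hbj
            simp only [Finset.mem_Ioc] at hb
            rw [hg0 (m - b) (by omega), mul_zero]
        · rw [if_neg h, Finset.sum_eq_zero]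
          intro k hk
          simp only [Finset.mem_Ioc] at hk
          by_cases hk1 : m - k ≤ -2
          · rw [hg0 _ hk1, mul_zero]
          · exfalso; omega
      rw [hR]
      ring
  have P1 : ∀ j : ℤ, 1 ≤ j →
      A j - (∑ k ∈ Finset.Icc 1 (min (j - 1) q), γ k * A (j - k))
        = (if j ≤ q then γ j * g (-1) * α 1 else 0)
          + (g 0 - γ 1 * g (-1)) * α j + g (-1) * α (j + 1) := by
    intro j hj
    have key : A j - ∑ k ∈ Finset.Icc 1 (min (j - 1) q), γ k * A (j - k)
        = ∑ s ∈ Finset.Icc 1 p,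
            (g (j - s) - ∑ k ∈ Finset.Icc 1 (min (j - 1) q), γ k * g (j - s - k)) * α s := by
      simp only [hA, Finset.mul_sum, sub_mul, Finset.sum_mul, Finset.sum_sub_distrib]
      rw [Finset.sum_comm]
      congr 1
      apply Finset.sum_congr rfl
      intro s _
      apply Finset.sum_congr rfl
      intro k _
      rw [show j - s - k = j - k - s by ring]
      ring
    rw [key]
    have expand : ∀ s ∈ Finset.Icc 1 p,
        (g (j - s) - ∑ k ∈ Finset.Icc 1 (min (j - 1) q), γ k * g (j - s - k)) * α s
        = (if j ≤ q ∧ j - s = j - 1 then γ j * g (-1) else 0) * α s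
          + (if j - s = 0 then g 0 - γ 1 * g (-1) else 0) * α s
          + (if j - s = -1 then g (-1) else 0) * α s := by
      intro s hs
      simp only [Finset.mem_Icc] at hs
      rw [D j (j - s) hj (by omega)]
      ring
    rw [Finset.sum_congr rfl expand, Finset.sum_add_distrib, Finset.sum_add_distrib]
    have hS1 : ∑ s ∈ Finset.Icc 1 p,
        (if j ≤ q ∧ j - s = j - 1 then γ j * g (-1) else 0) * α s
        = (if j ≤ q then γ j * g (-1) * α 1 else 0) := by
      rw [Finset.sum_eq_single_of_mem 1 (by simp only [Finset.mem_Icc]; omega)]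
      · by_cases h : j ≤ q
        · rw [if_pos (⟨h, by ring⟩ : j ≤ q ∧ j - 1 = j - 1), if_pos h]
        · rw [if_neg (by rintro ⟨h', -⟩; exact h h'), if_neg h, zero_mul]
      · intro b hb hb1
        simp only [Finset.mem_Icc] at hb
        rw [if_neg (by rintro ⟨-, h⟩; omega), zero_mul]
    have hS2 : ∑ s ∈ Finset.Icc 1 p,
        (if j - s = 0 then g 0 - γ 1 * g (-1) else 0) * α s
        = (g 0 - γ 1 * g (-1)) * α j := by
      by_cases hjp : j ≤ p
      · rw [Finset.sum_eq_single_of_mem j (by simp only [Finset.mem_Icc]; omega)]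
        · rw [if_pos (by omega)]
        · intro b hb hbj
          simp only [Finset.mem_Icc] at hb
          rw [if_neg (by omega), zero_mul]
      · rw [hα j (Or.inl (by omega)), mul_zero, Finset.sum_eq_zero]
        intro k hk
        simp only [Finset.mem_Icc] at hk
        rw [if_neg (by omega), zero_mul]
    have hS3 : ∑ s ∈ Finset.Icc 1 p,
        (if j - s = -1 then g (-1) else 0) * α s
        = g (-1) * α (j + 1) := by
      by_cases hjp : j + 1 ≤ p
      · rw [Finset.sum_eq_single_of_mem (j + 1) (by simp only [Finset.mem_Icc]; omega)]
        · rw [if_pos (by omega)]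
        · intro b hb hbj
          simp only [Finset.mem_Icc] at hb
          rw [if_neg (by omega), zero_mul]
      · rw [hα (j + 1) (Or.inl (by omega)), mul_zero, Finset.sum_eq_zero]
        intro k hk
        simp only [Finset.mem_Icc] at hk
        rw [if_neg (by omega), zero_mul]
    rw [hS1, hS2, hS3]
  refine ⟨P1, ?_, ?_⟩
  · intro j hj
    rw [P1 j (by omega), if_neg (show ¬j ≤ q by omega),
      hα j (Or.inl (by omega)), hα (j + 1) (Or.inl (by omega))]
    ring
  · intro ϱ1 ϱ2 ϱ3 h1 h2 j hj
    rw [h1, h2]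
    have e1 : ¬j ≤ p → α j = 0 := fun h => hα j (Or.inl (by omega))
    have e2 : ¬j ≤ p - 1 → α (j + 1) = 0 := fun h => hα (j + 1) (Or.inl (by omega))
    have b1 : (if j ≤ p then (ϱ1 - ϱ2) * α j else 0) = (ϱ1 - ϱ2) * α j := by
      split_ifs with h
      · rfl
      · rw [e1 h, mul_zero]
    have b2 : (if j ≤ p - 1 then 2 * ϱ3 * α (j + 1) else 0) = 2 * ϱ3 * α (j + 1) := by
      split_ifs with h
      · rfl
      · rw [e2 h, mul_zero]
    have b3 : (if j ≤ q then γ j * (2 * ϱ3) * α 1 else 0)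
        = (if j ≤ q then 2 * ϱ3 * γ j * α 1 else 0) := by
      split_ifs with h
      · ring
      · rfl
    rw [b1, b2, b3]
    ring
end

section
/- If Σ_{i=1}^q |γ_i| < 1, then the series Σ_{m=1}^∞ g_m converges absolutely and (1 − Σ_{i=1}^q γ_i)·Σ_{m=1}^∞ g_m = (g_0 + g_{−1})·Σ_{i=1}^q γ_i − g_{−1}·γ_1. (This identity yields the intercept ω^g of the DR Beta representation in Proposition 1(a).) -/
/-- If `∑ᵢ|γᵢ| < 1` then `∑_{m≥1} g_m` converges absolutely and
`(1 − ∑γᵢ)·∑_{m≥1} g_m = (g₀ + g₋₁)·∑γᵢ − g₋₁·γ₁`. -/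
theorem stmt_4 (q : ℤ) (hq : 1 ≤ q) (γ : ℤ → ℝ)
    (hγ : ∀ k : ℤ, q < k ∨ k ≤ 0 → γ k = 0)
    (g : ℤ → ℝ)
    (hg0 : ∀ m : ℤ, m ≤ -2 → g m = 0)
    (hgrec : ∀ m : ℤ, 1 ≤ m → g m = ∑ k ∈ Finset.Icc 1 q, γ k * g (m - k))
    (hsum : (∑ i ∈ Finset.Icc 1 q, |γ i|) < 1) :
    Summable (fun m : ℕ => |g ((m : ℤ) + 1)|) ∧
    (1 - ∑ i ∈ Finset.Icc 1 q, γ i) * (∑' m : ℕ, g ((m : ℤ) + 1))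
      = (g 0 + g (-1)) * (∑ i ∈ Finset.Icc 1 q, γ i) - g (-1) * γ 1 := by
  set s : ℝ := ∑ i ∈ Finset.Icc 1 q, |γ i| with hs
  have hs0 : 0 ≤ s := Finset.sum_nonneg fun i _ => abs_nonneg _
  set f : ℤ → ℝ := fun j => |g j| with hf
  have hf0 : ∀ j, 0 ≤ f j := fun j => abs_nonneg _
  have hfz : ∀ j : ℤ, j ≤ -2 → f j = 0 := fun j hj => by simp [hf, hg0 j hj]
  set B : ℝ := f (-1) + f 0 with hB
  have hB0 : 0 ≤ B := add_nonneg (hf0 _) (hf0 _)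
  have hIocSplit : ∀ a b c : ℤ, a ≤ b → b ≤ c →
      ∑ j ∈ Finset.Ioc a c, f j = ∑ j ∈ Finset.Ioc a b, f j + ∑ j ∈ Finset.Ioc b c, f j := by
    intro a b c hab hbc
    rw [← Finset.Ioc_union_Ioc_eq_Ioc hab hbc, Finset.sum_union]
    rw [Finset.disjoint_left]
    intro x hx hx'
    simp only [Finset.mem_Ioc] at hx hx'
    omega
  -- Lemma A : shifted partial abs sums are bounded by B + partial abs sum
  have lemA : ∀ k ∈ Finset.Icc 1 q, ∀ N : ℤ, 0 ≤ N →
      ∑ j ∈ Finset.Icc 1 N, f (j - k) ≤ B + ∑ j ∈ Finset.Icc 1 N, f j := by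
    intro k hk N hN
    obtain ⟨hk1, hkq⟩ := Finset.mem_Icc.mp hk
    have e1 : ∑ j ∈ Finset.Icc 1 N, f (j - k) = ∑ j ∈ Finset.Icc (1-k) (N-k), f j := by
      refine Finset.sum_nbij' (fun j => j - k) (fun j => j + k) ?_ ?_ ?_ ?_ ?_
      · intro a ha; simp only [Finset.mem_Icc] at ha ⊢; omega
      · intro a ha; simp only [Finset.mem_Icc] at ha ⊢; omega
      · intro a ha; ring
      · intro a ha; ring
      · intro a ha; rfl
    have e2 : ∑ j ∈ Finset.Icc (1-k) (N-k), f j ≤ ∑ j ∈ Finset.Icc (1-k) N, f j :=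
      Finset.sum_le_sum_of_subset_of_nonneg
        (Finset.Icc_subset_Icc_right (by omega)) (fun j _ _ => hf0 j)
    have eIoc : Finset.Icc (1-k) N = Finset.Ioc (-k) N := by
      ext x; simp only [Finset.mem_Icc, Finset.mem_Ioc]; omega
    have e3 : ∑ j ∈ Finset.Ioc (-k) N, f j
        = ∑ j ∈ Finset.Ioc (-k) 0, f j + ∑ j ∈ Finset.Ioc 0 N, f j :=
      hIocSplit (-k) 0 N (by omega) hN
    have e4 : ∑ j ∈ Finset.Ioc (-k) 0, f j ≤ B := by
      have sub2 : Finset.Ioc (-k) 0 ⊆ Finset.Ioc (-(max k 2)) 0 :=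
        Finset.Ioc_subset_Ioc_left (by omega)
      have e5 : ∑ j ∈ Finset.Ioc (-(max k 2)) 0, f j
          = ∑ j ∈ Finset.Ioc (-(max k 2)) (-2), f j + ∑ j ∈ Finset.Ioc (-2 : ℤ) 0, f j :=
        hIocSplit (-(max k 2)) (-2) 0 (by omega) (by omega)
      have e6 : ∑ j ∈ Finset.Ioc (-(max k 2) : ℤ) (-2), f j = 0 :=
        Finset.sum_eq_zero fun j hj => hfz j (Finset.mem_Ioc.mp hj).2
      have e7 : Finset.Ioc (-2 : ℤ) 0 = {-1, 0} := by
        ext x; simp only [Finset.mem_Ioc, Finset.mem_insert, Finset.mem_singleton]; omega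
      have e8 : ∑ j ∈ Finset.Ioc (-2 : ℤ) 0, f j = B := by
        rw [e7, Finset.sum_pair (by norm_num : (-1 : ℤ) ≠ 0)]
      calc ∑ j ∈ Finset.Ioc (-k) 0, f j
          ≤ ∑ j ∈ Finset.Ioc (-(max k 2)) 0, f j :=
            Finset.sum_le_sum_of_subset_of_nonneg sub2 (fun j _ _ => hf0 j)
        _ = B := by rw [e5, e6, e8]; ring
    have eIcc : Finset.Icc (1 : ℤ) N = Finset.Ioc 0 N := by
      ext x; simp only [Finset.mem_Icc, Finset.mem_Ioc]; omega
    calc ∑ j ∈ Finset.Icc 1 N, f (j - k) = ∑ j ∈ Finset.Icc (1-k) (N-k), f j := e1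
      _ ≤ ∑ j ∈ Finset.Icc (1-k) N, f j := e2
      _ = ∑ j ∈ Finset.Ioc (-k) 0, f j + ∑ j ∈ Finset.Ioc 0 N, f j := by rw [eIoc, e3]
      _ ≤ B + ∑ j ∈ Finset.Icc 1 N, f j := by rw [eIcc]; exact add_le_add_left e4 _
  -- bound on partial sums
  have hT : ∀ n : ℕ, ∑ j ∈ Finset.Icc (1 : ℤ) (n : ℤ), f j ≤ s * B / (1 - s) := by
    intro n
    set T := ∑ j ∈ Finset.Icc (1 : ℤ) (n : ℤ), f j with hTdef
    have hT0 : 0 ≤ T := Finset.sum_nonneg fun j _ => hf0 j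
    have step : T ≤ s * (B + T) := by
      have h1 : T ≤ ∑ j ∈ Finset.Icc (1 : ℤ) (n : ℤ), ∑ k ∈ Finset.Icc 1 q, |γ k| * f (j - k) := by
        apply Finset.sum_le_sum
        intro j hj
        obtain ⟨hj1, _⟩ := Finset.mem_Icc.mp hj
        calc f j = |∑ k ∈ Finset.Icc 1 q, γ k * g (j - k)| := by
              simp only [hf]; rw [hgrec j hj1]
          _ ≤ ∑ k ∈ Finset.Icc 1 q, |γ k * g (j - k)| := Finset.abs_sum_le_sum_abs _ _
          _ = ∑ k ∈ Finset.Icc 1 q, |γ k| * f (j - k) := by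
              exact Finset.sum_congr rfl fun k _ => abs_mul _ _
      rw [Finset.sum_comm] at h1
      have h2 : ∑ k ∈ Finset.Icc 1 q, ∑ j ∈ Finset.Icc (1 : ℤ) (n : ℤ), |γ k| * f (j - k)
          ≤ ∑ k ∈ Finset.Icc 1 q, |γ k| * (B + T) := by
        apply Finset.sum_le_sum
        intro k hk
        rw [← Finset.mul_sum]
        exact mul_le_mul_of_nonneg_left (lemA k hk (n : ℤ) (by positivity)) (abs_nonneg _)
      calc T ≤ _ := h1
        _ ≤ _ := h2
        _ = s * (B + T) := by rw [← Finset.sum_mul]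
    rw [le_div_iff₀ (by linarith : (0:ℝ) < 1 - s)]
    nlinarith
  have hrange : ∀ n : ℕ, ∑ m ∈ Finset.range n, |g ((m : ℤ) + 1)|
      = ∑ j ∈ Finset.Icc (1 : ℤ) (n : ℤ), f j := by
    intro n
    induction n with
    | zero => simp
    | succ n ih =>
      rw [Finset.sum_range_succ, ih]
      have hcast : ((n + 1 : ℕ) : ℤ) = (n : ℤ) + 1 := by push_cast; ring
      have hins : Finset.Icc (1:ℤ) ((n:ℤ) + 1) = insert ((n:ℤ)+1) (Finset.Icc 1 (n:ℤ)) := by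
        ext x; simp only [Finset.mem_Icc, Finset.mem_insert]; omega
      rw [hcast, hins, Finset.sum_insert (by simp only [Finset.mem_Icc]; omega)]
      ring
  have hsummable : Summable (fun m : ℕ => |g ((m : ℤ) + 1)|) := by
    apply summable_of_sum_range_le (fun m => abs_nonneg _)
    intro n; rw [hrange]; exact hT n
  refine ⟨hsummable, ?_⟩
  have hg_sum : Summable (fun m : ℕ => g ((m : ℤ) + 1)) := hsummable.of_abs
  set G := ∑' m : ℕ, g ((m : ℤ) + 1) with hG
  -- shifted sums
  have key : ∀ k ∈ Finset.Icc 1 q,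
      Summable (fun m : ℕ => g ((m : ℤ) + 1 - k)) ∧
      ∑' m : ℕ, g ((m : ℤ) + 1 - k) = G + g 0 + (if 2 ≤ k then g (-1) else 0) := by
    intro k hk
    obtain ⟨hk1, hkq⟩ := Finset.mem_Icc.mp hk
    obtain ⟨K, hKk⟩ : ∃ K : ℕ, (K : ℤ) = k := ⟨k.toNat, Int.toNat_of_nonneg (by omega)⟩
    have heq : (fun m : ℕ => g (((m + K : ℕ) : ℤ) + 1 - k)) = fun m : ℕ => g ((m : ℤ) + 1) := by
      funext m; congr 1; push_cast; rw [hKk]; ring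
    have hsumm : Summable (fun m : ℕ => g ((m : ℤ) + 1 - k)) := by
      rw [← summable_nat_add_iff K]
      exact heq ▸ hg_sum
    have htsum : ∑' m : ℕ, g ((m : ℤ) + 1 - k)
        = (∑ m ∈ Finset.range K, g ((m : ℤ) + 1 - k)) + G := by
      rw [← hsumm.sum_add_tsum_nat_add K]
      congr 1
      rw [hG]
      exact tsum_congr fun m => congrFun heq m
    have hfin : ∑ m ∈ Finset.range K, g ((m : ℤ) + 1 - k)
        = g 0 + (if 2 ≤ k then g (-1) else 0) := by
      rcases Nat.lt_or_ge K 2 with h | h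
      · have hK1 : K = 1 := by omega
        have hk1' : k = 1 := by omega
        subst hk1'
        rw [hK1]
        norm_num
      · obtain ⟨K', rfl⟩ : ∃ K', K = K' + 2 := ⟨K - 2, by omega⟩
        have h2k : (2 : ℤ) ≤ k := by omega
        rw [Finset.sum_range_succ, Finset.sum_range_succ]
        have hz : ∑ m ∈ Finset.range K', g ((m : ℤ) + 1 - k) = 0 :=
          Finset.sum_eq_zero fun m hm => by
            have := Finset.mem_range.mp hm
            exact hg0 _ (by omega)
        have hm1 : ((K' : ℤ) + 1 - k) = -1 := by omega
        have hm0 : (((K' + 1 : ℕ) : ℤ) + 1 - k) = 0 := by push_cast; omega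
        rw [hz, hm1, hm0, if_pos h2k]
        ring
    exact ⟨hsumm, by rw [htsum, hfin]; ring⟩
  have hGeq : G = ∑ k ∈ Finset.Icc 1 q, γ k * (G + g 0 + (if 2 ≤ k then g (-1) else 0)) := by
    conv_lhs => rw [hG]
    calc ∑' m : ℕ, g ((m : ℤ) + 1)
        = ∑' m : ℕ, ∑ k ∈ Finset.Icc 1 q, γ k * g ((m : ℤ) + 1 - k) :=
          tsum_congr fun m => hgrec _ (by omega)
      _ = ∑ k ∈ Finset.Icc 1 q, ∑' m : ℕ, γ k * g ((m : ℤ) + 1 - k) :=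
          Summable.tsum_finsetSum fun k hk => ((key k hk).1.mul_left _)
      _ = ∑ k ∈ Finset.Icc 1 q, γ k * ∑' m : ℕ, g ((m : ℤ) + 1 - k) :=
          Finset.sum_congr rfl fun k hk => tsum_mul_left
      _ = _ := Finset.sum_congr rfl fun k hk => by rw [(key k hk).2]
  set s' : ℝ := ∑ i ∈ Finset.Icc 1 q, γ i with hs'
  have hsplit : ∑ k ∈ Finset.Icc 1 q, γ k * (G + g 0 + (if 2 ≤ k then g (-1) else 0))
      = s' * (G + g 0) + (s' * g (-1) - γ 1 * g (-1)) := by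
    have e1 : ∀ k ∈ Finset.Icc 1 q,
        γ k * (G + g 0 + (if 2 ≤ k then g (-1) else 0))
        = γ k * (G + g 0) + γ k * g (-1) - (if k = 1 then γ k * g (-1) else 0) := by
      intro k hk
      obtain ⟨hk1, hkq⟩ := Finset.mem_Icc.mp hk
      by_cases h : k = 1
      · subst h; norm_num
      · have h2 : (2:ℤ) ≤ k := by omega
        rw [if_pos h2, if_neg h]; ring
    rw [Finset.sum_congr rfl e1]
    rw [Finset.sum_sub_distrib, Finset.sum_add_distrib, ← Finset.sum_mul, ← Finset.sum_mul]
    rw [Finset.sum_ite_eq' (Finset.Icc 1 q) 1 (fun k => γ k * g (-1))]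
    rw [if_pos (Finset.mem_Icc.mpr ⟨le_refl 1, hq⟩)]
    ring
  have hexp : G = s' * (G + g 0) + (s' * g (-1) - γ 1 * g (-1)) := hGeq.trans hsplit
  linear_combination hexp
end

section
/- Suppose the pair (𝓖, 𝓗) has mixing coefficient at most ρ̄, and let ξ be an 𝓗-measurable square-integrable random variable with E[ξ] = 0. Then E[(E[ξ | 𝓖])²] ≤ ρ̄²·E[ξ²], i.e. the conditional expectation operator onto 𝓖 contracts centered 𝓗-measurable variables in L² by the factor ρ̄. -/
open MeasureTheory


lemma my_memℒp_condexp_two {Ω : Type*} [m0 : MeasurableSpace Ω] (μ : Measure Ω)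
    [IsProbabilityMeasure μ] {G : MeasurableSpace Ω} (hG : G ≤ m0)
    {ξ : Ω → ℝ} (hξ2 : MemLp ξ 2 μ) : MemLp (μ[ξ|G]) 2 μ := by
  haveI : SigmaFinite (μ.trim hG) := by infer_instance
  set f : Lp ℝ 2 μ := hξ2.toLp ξ with hf
  have hfe : (f : Ω → ℝ) =ᵐ[μ] ξ := hξ2.coeFn_toLp
  have h : (condExpL2 ℝ ℝ hG f : Ω → ℝ) =ᵐ[μ] μ[ξ|G] := by
    refine ae_eq_condExp_of_forall_setIntegral_eq hG (hξ2.integrable one_le_two)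
      (fun s hs hμs => ?_) (fun s hs hμs => ?_) ?_
    · exact integrableOn_condExpL2_of_measure_ne_top hG hμs.ne f
    · rw [integral_condExpL2_eq hG f hs hμs.ne]
      exact integral_congr_ae (ae_restrict_of_ae hfe)
    · exact aestronglyMeasurable_condExpL2 hG f
  exact (Lp.memLp ((condExpL2 ℝ ℝ hG f).1)).ae_eq h

/-- The pair `(G, H)` of σ-algebras has mixing coefficient at most `ρ`:
`|E[UV]| ≤ ρ` for all centered, `L²`-normalized `U` (`G`-measurable) and
`V` (`H`-measurable). -/
def mixingCoefLE {Ω : Type*} {_m0 : MeasurableSpace Ω} (μ : Measure Ω)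
    (G H : MeasurableSpace Ω) (ρ : ℝ) : Prop :=
  ∀ U V : Ω → ℝ,
    StronglyMeasurable[G] U → StronglyMeasurable[H] V →
    MemLp U 2 μ → MemLp V 2 μ →
    (∫ ω, U ω ∂μ) = 0 → (∫ ω, V ω ∂μ) = 0 →
    (∫ ω, (U ω) ^ 2 ∂μ) ≤ 1 → (∫ ω, (V ω) ^ 2 ∂μ) ≤ 1 →
    |∫ ω, U ω * V ω ∂μ| ≤ ρ

/-- Conditional expectation onto `G` contracts centered
`H`-measurable variables in `L²` by the mixing coefficient `ρ`. -/
theorem stmt_6 {Ω : Type*} {m0 : MeasurableSpace Ω} (μ : Measure Ω)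
    [IsProbabilityMeasure μ] (G H : MeasurableSpace Ω)
    (hG : G ≤ m0) (hH : H ≤ m0) (ρ : ℝ) (hρ : 0 ≤ ρ)
    (hmix : mixingCoefLE μ G H ρ)
    (ξ : Ω → ℝ) (hξm : StronglyMeasurable[H] ξ)
    (hξ2 : MemLp ξ 2 μ) (hξ0 : (∫ ω, ξ ω ∂μ) = 0) :
    (∫ ω, (μ[ξ | G]) ω ^ 2 ∂μ) ≤ ρ ^ 2 * ∫ ω, ξ ω ^ 2 ∂μ := by
  haveI : SigmaFinite (μ.trim hG) := by infer_instance
  set η : Ω → ℝ := μ[ξ|G] with hη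
  have hξint : Integrable ξ μ := hξ2.integrable one_le_two
  have hηm : StronglyMeasurable[G] η := stronglyMeasurable_condExp
  have hη2 : MemLp η 2 μ := my_memℒp_condexp_two (m0 := m0) μ hG hξ2
  have hη0 : (∫ ω, η ω ∂μ) = 0 := by rw [hη, integral_condExp hG, hξ0]
  -- integrability of η * ξ and η * η
  have hmul : MemLp (η • ξ) 1 μ := by
    exact hξ2.smul hη2
  have hint : Integrable (fun ω => η ω * ξ ω) μ := memLp_one_iff_integrable.mp hmul
  -- key identity : ∫ η ξ = ∫ η ^ 2
  have hcond : μ[(fun ω => η ω * ξ ω)|G] =ᵐ[μ] fun ω => η ω * η ω := by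
    have := condExp_mul_of_stronglyMeasurable_left (μ := μ) hηm (by exact hint) hξint
    exact this
  have hkey : (∫ ω, η ω * ξ ω ∂μ) = ∫ ω, η ω ^ 2 ∂μ := by
    rw [← integral_condExp hG (f := fun ω => η ω * ξ ω), integral_congr_ae hcond]
    simp [sq]
  set A := ∫ ω, η ω ^ 2 ∂μ with hA
  set B := ∫ ω, ξ ω ^ 2 ∂μ with hB
  have hAnn : 0 ≤ A := integral_nonneg fun ω => sq_nonneg _
  have hBnn : 0 ≤ B := integral_nonneg fun ω => sq_nonneg _
  by_cases hA0 : A = 0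
  · rw [hA0]; positivity
  have hApos : 0 < A := lt_of_le_of_ne hAnn (Ne.symm hA0)
  have hBpos : 0 < B := by
    rcases lt_or_eq_of_le hBnn with h | h
    · exact h
    -- B = 0 : then ξ = 0 a.e., so η = 0 a.e., contradicting A ≠ 0
    exfalso
    have hsq : (fun ω => ξ ω ^ 2) =ᵐ[μ] 0 :=
      (integral_eq_zero_iff_of_nonneg (fun ω => sq_nonneg _) hξ2.integrable_sq).mp h.symm
    have hξz : ξ =ᵐ[μ] 0 := hsq.mono fun ω hω => by
      simpa [pow_eq_zero_iff] using hω
    have hηz : η =ᵐ[μ] 0 := by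
      calc η =ᵐ[μ] μ[(0 : Ω → ℝ)|G] := condExp_congr_ae hξz
        _ = 0 := condExp_zero
    apply hA0
    rw [hA]
    calc (∫ ω, η ω ^ 2 ∂μ) = ∫ _ω, (0:ℝ) ∂μ :=
          integral_congr_ae (hηz.mono fun ω hω => by simp [hω])
      _ = 0 := integral_zero _ _
  -- normalize and apply the mixing bound
  set a := Real.sqrt A with ha
  set b := Real.sqrt B with hb
  have hapos : 0 < a := Real.sqrt_pos.mpr hApos
  have hbpos : 0 < b := Real.sqrt_pos.mpr hBpos
  have ha2 : a ^ 2 = A := Real.sq_sqrt hAnn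
  have hb2 : b ^ 2 = B := Real.sq_sqrt hBnn
  have hbound : |∫ ω, (a⁻¹ * η ω) * (b⁻¹ * ξ ω) ∂μ| ≤ ρ := by
    refine hmix _ _ (hηm.const_mul _) (hξm.const_mul _)
      (hη2.const_mul _) (hξ2.const_mul _) ?_ ?_ ?_ ?_
    · rw [integral_const_mul, hη0, mul_zero]
    · rw [integral_const_mul, hξ0, mul_zero]
    · have h1 : (∫ ω, (a⁻¹ * η ω) ^ 2 ∂μ) = A⁻¹ * A := by
        simp_rw [mul_pow, integral_const_mul]
        rw [← hA, inv_pow, ha2]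
      rw [h1, inv_mul_cancel₀ hA0]
    · have h1 : (∫ ω, (b⁻¹ * ξ ω) ^ 2 ∂μ) = B⁻¹ * B := by
        simp_rw [mul_pow, integral_const_mul]
        rw [← hB, inv_pow, hb2]
      rw [h1, inv_mul_cancel₀ (ne_of_gt hBpos)]
  -- simplify the integral in the bound
  have heq : (∫ ω, (a⁻¹ * η ω) * (b⁻¹ * ξ ω) ∂μ) = a⁻¹ * b⁻¹ * A := by
    have : ∀ ω, (a⁻¹ * η ω) * (b⁻¹ * ξ ω) = a⁻¹ * b⁻¹ * (η ω * ξ ω) := fun ω => by ring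
    simp_rw [this, integral_const_mul, hkey]
  rw [heq, abs_of_nonneg (by positivity)] at hbound
  -- from a⁻¹ b⁻¹ A ≤ ρ and a² = A, b² = B, conclude A ≤ ρ² B
  have hab : a ≤ ρ * b := by
    have h2 : a⁻¹ * b⁻¹ * (a * a) ≤ ρ := by rw [← sq, ha2]; exact hbound
    have h3 : a⁻¹ * b⁻¹ * (a * a) = a / b := by field_simp
    rw [h3, div_le_iff₀ hbpos] at h2
    linarith [h2]
  calc A = a ^ 2 := ha2.symm
    _ ≤ (ρ * b) ^ 2 := by
        apply pow_le_pow_left₀ (le_of_lt hapos) hab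
    _ = ρ ^ 2 * B := by rw [mul_pow, hb2]
end

section
/- Suppose the pair (𝓖, 𝓗) has mixing coefficient at most ρ̄, and let ξ be an 𝓗-measurable random variable with E[ξ] = 0 and finite moments of all orders. Then for every integer w ≥ 2, E[|E[ξ | 𝓖]|^w] ≤ ρ̄·(E[ξ²])^{1/2}·(E[|E[ξ | 𝓖]|^{2(w−1)}])^{1/2}. Consequently, by conditional Jensen, E[|E[ξ | 𝓖]|^w] ≤ ρ̄·(E[ξ²])^{1/2}·(E[|ξ|^{2(w−1)}])^{1/2}. -/
open MeasureTheory

open scoped ENNReal NNReal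

section Helpers
variable {Ω : Type*} {m0 : MeasurableSpace Ω} {μ : Measure Ω}

lemma integrable_abs_pow_of_memℒp {f : Ω → ℝ} {n : ℕ} (hn : n ≠ 0)
    (hf : MemLp f n μ) : Integrable (fun ω => |f ω| ^ n) μ := by
  have h := hf.integrable_norm_rpow (by exact_mod_cast hn) (ENNReal.natCast_ne_top n)
  simpa only [ENNReal.toReal_natCast, Real.norm_eq_abs, Real.rpow_natCast] using h


lemma meas_abs_pow {Ω : Type*} {m : MeasurableSpace Ω} {f : Ω → ℝ}
    (hf : Measurable f) (n : ℕ) : Measurable fun ω => |f ω| ^ n :=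
  hf.abs.pow_const n

lemma meas_mul_abs_pow {Ω : Type*} {m : MeasurableSpace Ω} {f : Ω → ℝ}
    (hf : Measurable f) (n : ℕ) : Measurable fun ω => f ω * |f ω| ^ n :=
  hf.mul (hf.abs.pow_const n)

lemma meas_min_abs_pow {Ω : Type*} {m : MeasurableSpace Ω} {f : Ω → ℝ}
    (hf : Measurable f) (c : ℝ) (n : ℕ) :
    Measurable fun ω => (min |f ω| c) ^ n :=
  (hf.abs.min measurable_const).pow_const n

lemma integrable_mul_of_memℒp_two {f g : Ω → ℝ}
    (hf : MemLp f 2 μ) (hg : MemLp g 2 μ) :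
    Integrable (fun ω => f ω * g ω) μ := by
  have hf2 : Integrable (fun ω => f ω ^ 2) μ :=
    (memLp_two_iff_integrable_sq hf.aestronglyMeasurable).1 hf
  have hg2 : Integrable (fun ω => g ω ^ 2) μ :=
    (memLp_two_iff_integrable_sq hg.aestronglyMeasurable).1 hg
  refine Integrable.mono' ((hf2.add hg2).div_const 2) (hf.aestronglyMeasurable.mul
    hg.aestronglyMeasurable) (Filter.Eventually.of_forall fun ω => ?_)
  simp only [Pi.add_apply, Real.norm_eq_abs, abs_mul]
  nlinarith [sq_nonneg (|f ω| - |g ω|), abs_nonneg (f ω), abs_nonneg (g ω),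
    sq_abs (f ω), sq_abs (g ω)]

lemma mix_bound [IsProbabilityMeasure μ] {G H : MeasurableSpace Ω}
    {ρ : ℝ} (hρ : 0 ≤ ρ) (hmix : mixingCoefLE μ G H ρ) (U V : Ω → ℝ)
    (hU : StronglyMeasurable[G] U) (hV : StronglyMeasurable[H] V)
    (hU2 : MemLp U 2 μ) (hV2 : MemLp V 2 μ)
    (hU0 : (∫ ω, U ω ∂μ) = 0) (hV0 : (∫ ω, V ω ∂μ) = 0) :
    |∫ ω, U ω * V ω ∂μ| ≤
      ρ * Real.sqrt (∫ ω, U ω ^ 2 ∂μ) * Real.sqrt (∫ ω, V ω ^ 2 ∂μ) := by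
  have hUsq : Integrable (fun ω => U ω ^ 2) μ :=
    (memLp_two_iff_integrable_sq hU2.aestronglyMeasurable).1 hU2
  have hVsq : Integrable (fun ω => V ω ^ 2) μ :=
    (memLp_two_iff_integrable_sq hV2.aestronglyMeasurable).1 hV2
  have hUnn : (0:ℝ) ≤ ∫ ω, U ω ^ 2 ∂μ := integral_nonneg fun ω => sq_nonneg _
  have hVnn : (0:ℝ) ≤ ∫ ω, V ω ^ 2 ∂μ := integral_nonneg fun ω => sq_nonneg _
  -- zero cases
  by_cases hUz : (∫ ω, U ω ^ 2 ∂μ) = 0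
  · have hU0' : (fun ω => U ω ^ 2) =ᵐ[μ] 0 :=
      (integral_eq_zero_iff_of_nonneg (fun ω => sq_nonneg _) hUsq).1 hUz
    have : (fun ω => U ω * V ω) =ᵐ[μ] 0 := by
      filter_upwards [hU0'] with ω hω
      have : U ω = 0 := by
        have := hω; simp only [Pi.zero_apply] at this; nlinarith
      simp [this]
    have hz : |∫ ω, U ω * V ω ∂μ| = 0 := by rw [integral_congr_ae this]; simp
    rw [hz]; positivity
  by_cases hVz : (∫ ω, V ω ^ 2 ∂μ) = 0
  · have hV0' : (fun ω => V ω ^ 2) =ᵐ[μ] 0 :=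
      (integral_eq_zero_iff_of_nonneg (fun ω => sq_nonneg _) hVsq).1 hVz
    have : (fun ω => U ω * V ω) =ᵐ[μ] 0 := by
      filter_upwards [hV0'] with ω hω
      have : V ω = 0 := by
        have := hω; simp only [Pi.zero_apply] at this; nlinarith
      simp [this]
    have hz : |∫ ω, U ω * V ω ∂μ| = 0 := by rw [integral_congr_ae this]; simp
    rw [hz]; positivity
  -- main case
  set a := Real.sqrt (∫ ω, U ω ^ 2 ∂μ) with ha_def
  set b := Real.sqrt (∫ ω, V ω ^ 2 ∂μ) with hb_def
  have ha : 0 < a := Real.sqrt_pos.mpr (lt_of_le_of_ne hUnn (Ne.symm hUz))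
  have hb : 0 < b := Real.sqrt_pos.mpr (lt_of_le_of_ne hVnn (Ne.symm hVz))
  have ha2 : a ^ 2 = ∫ ω, U ω ^ 2 ∂μ := Real.sq_sqrt hUnn
  have hb2 : b ^ 2 = ∫ ω, V ω ^ 2 ∂μ := Real.sq_sqrt hVnn
  have key := hmix (fun ω => a⁻¹ * U ω) (fun ω => b⁻¹ * V ω)
    (stronglyMeasurable_const.mul hU)
    (stronglyMeasurable_const.mul hV)
    (hU2.const_mul a⁻¹) (hV2.const_mul b⁻¹)
    (by rw [integral_const_mul, hU0, mul_zero])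
    (by rw [integral_const_mul, hV0, mul_zero])
    (by
      simp only [mul_pow]
      rw [integral_const_mul, ← ha2]
      rw [inv_pow]
      rw [inv_mul_cancel₀ (by positivity)])
    (by
      simp only [mul_pow]
      rw [integral_const_mul, ← hb2]
      rw [inv_pow]
      rw [inv_mul_cancel₀ (by positivity)])
  have heq : (∫ ω, (a⁻¹ * U ω) * (b⁻¹ * V ω) ∂μ) = a⁻¹ * b⁻¹ * ∫ ω, U ω * V ω ∂μ := by
    rw [← integral_const_mul]
    congr 1; funext ω; ring
  rw [heq, abs_mul, abs_of_nonneg (by positivity : (0:ℝ) ≤ a⁻¹ * b⁻¹)] at key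
  calc |∫ ω, U ω * V ω ∂μ| = a * b * (a⁻¹ * b⁻¹ * |∫ ω, U ω * V ω ∂μ|) := by
        field_simp
    _ ≤ a * b * ρ := by
        apply mul_le_mul_of_nonneg_left key (by positivity)
    _ = ρ * a * b := by ring

end Helpers


lemma young_nat (a b : ℝ) (ha : 0 ≤ a) (hb : 0 ≤ b) (m : ℕ) :
    a ^ m * b ≤ (m : ℝ) / (m + 1) * a ^ (m + 1) + 1 / (m + 1) * b ^ (m + 1) := by
  have hm1 : (0:ℝ) < (m:ℝ) + 1 := by positivity
  have h := Real.geom_mean_le_arith_mean2_weighted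
    (w₁ := (m : ℝ) / (m + 1)) (w₂ := 1 / (m + 1))
    (p₁ := a ^ (m + 1)) (p₂ := b ^ (m + 1))
    (by positivity) (by positivity) (by positivity) (by positivity)
    (by field_simp)
  have h1 : (a ^ (m + 1)) ^ ((m : ℝ) / (m + 1)) = a ^ m := by
    rw [← Real.rpow_natCast a (m + 1), ← Real.rpow_mul ha]
    rw [show ((m + 1 : ℕ) : ℝ) * ((m : ℝ) / (m + 1)) = (m : ℝ) by
      push_cast; field_simp]
    exact Real.rpow_natCast a m
  have h2 : (b ^ (m + 1)) ^ ((1 : ℝ) / (m + 1)) = b := by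
    rw [← Real.rpow_natCast b (m + 1), ← Real.rpow_mul hb]
    rw [show ((m + 1 : ℕ) : ℝ) * ((1 : ℝ) / (m + 1)) = 1 by push_cast; field_simp]
    exact Real.rpow_one b
  rw [h1, h2] at h
  exact h

lemma clamp_abs (x K : ℝ) (hK : 0 ≤ K) : |max (min x K) (-K)| = min |x| K := by
  rcases le_total x K with h1 | h1
  · rw [min_eq_left h1]
    rcases le_total (-K) x with h2 | h2
    · rw [max_eq_left h2, min_eq_left (abs_le.mpr ⟨h2, h1⟩)]
    · rw [max_eq_right h2, abs_neg, abs_of_nonneg hK,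
        min_eq_right (by rw [abs_of_nonpos (h2.trans (by linarith))]; linarith)]
  · rw [min_eq_right h1, max_eq_left (by linarith), abs_of_nonneg hK,
      min_eq_right (by rw [abs_of_nonneg (hK.trans h1)]; exact h1)]

lemma clamp_sq (x K : ℝ) (hK : 0 ≤ K) :
    (max (min x K) (-K)) ^ 2 ≤ (max (min x K) (-K)) * x := by
  rcases le_total x K with h1 | h1
  · rw [min_eq_left h1]
    rcases le_total (-K) x with h2 | h2
    · rw [max_eq_left h2]; nlinarith
    · rw [max_eq_right h2]; nlinarith
  · rw [min_eq_right h1, max_eq_left (by linarith)]; nlinarith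

lemma condexp_pow_le {Ω : Type*} {m0 : MeasurableSpace Ω} (μ : Measure Ω)
    [IsProbabilityMeasure μ] (G : MeasurableSpace Ω) (hG : G ≤ m0)
    (ξ : Ω → ℝ) (hmom : ∀ r : ℕ, MemLp ξ r μ) (n : ℕ) (hn : 2 ≤ n) :
    MemLp (μ[ξ|G]) n μ ∧
      (∫ ω, |(μ[ξ|G]) ω| ^ n ∂μ) ≤ ∫ ω, |ξ ω| ^ n ∂μ := by
  obtain ⟨m, rfl⟩ : ∃ m, n = m + 2 := ⟨n - 2, by omega⟩
  haveI : IsFiniteMeasure (μ.trim hG) := isFiniteMeasure_trim hG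
  set η := μ[ξ|G] with hη_def
  have hη_sm : StronglyMeasurable[G] η := stronglyMeasurable_condExp
  have hη_meas : Measurable[m0] η := (hη_sm.mono hG).measurable
  have hξ_int : Integrable ξ μ := memLp_one_iff_integrable.mp (by simpa using hmom 1)
  have hξn_int : Integrable (fun ω => |ξ ω| ^ (m + 2)) μ :=
    integrable_abs_pow_of_memℒp (by omega) (hmom (m + 2))
  have hB0 : (0:ℝ) ≤ ∫ ω, |ξ ω| ^ (m + 2) ∂μ := integral_nonneg fun ω => by positivity
  set B := ∫ ω, |ξ ω| ^ (m + 2) ∂μ with hB_def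
  have hmin_meas : ∀ K : ℕ, Measurable[m0] fun ω => (min |η ω| (K:ℝ)) ^ (m + 2) :=
    fun K => meas_min_abs_pow hη_meas _ _
  have h_tn_int : ∀ K : ℕ, Integrable (fun ω => (min |η ω| (K:ℝ)) ^ (m + 2)) μ := by
    intro K
    refine Integrable.mono' (integrable_const ((K:ℝ) ^ (m + 2)))
      ((hmin_meas K).aestronglyMeasurable)
      (Filter.Eventually.of_forall fun ω => ?_)
    rw [Real.norm_eq_abs, abs_of_nonneg (by positivity)]
    exact pow_le_pow_left₀ (le_min (abs_nonneg _) (Nat.cast_nonneg _)) (min_le_right _ _) _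
  -- step 1 : the truncated bound
  have key : ∀ K : ℕ, (∫ ω, (min |η ω| (K:ℝ)) ^ (m + 2) ∂μ) ≤ B := by
    intro K
    have hK0 : (0:ℝ) ≤ (K:ℝ) := Nat.cast_nonneg K
    set t : Ω → ℝ := fun ω => max (min (η ω) K) (-(K:ℝ)) with ht_def
    have habs : ∀ ω, |t ω| = min |η ω| (K:ℝ) := fun ω => clamp_abs _ _ hK0
    have hsq : ∀ ω, t ω ^ 2 ≤ t ω * η ω := fun ω => clamp_sq _ _ hK0
    have htK : ∀ ω, |t ω| ≤ (K:ℝ) := fun ω => (habs ω) ▸ min_le_right _ _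
    have ht_m : Measurable[G] t :=
      ((hη_sm.measurable.min measurable_const).max measurable_const)
    set f : Ω → ℝ := fun ω => t ω * |t ω| ^ m with hf_def
    have hf_sm : StronglyMeasurable[G] f :=
      (ht_m.mul (ht_m.abs.pow_const m)).stronglyMeasurable
    have hf_abs : ∀ ω, |f ω| = |t ω| ^ (m + 1) := by
      intro ω
      simp only [hf_def, abs_mul, abs_abs, abs_pow, abs_abs]
      rw [pow_succ, mul_comm]
    have hf_bound : ∀ ω, ‖f ω‖ ≤ (K:ℝ) ^ (m + 1) := by
      intro ω; rw [Real.norm_eq_abs, hf_abs]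
      exact pow_le_pow_left₀ (abs_nonneg _) (htK ω) _
    have h_fη_int : Integrable (fun ω => f ω * η ω) μ :=
      integrable_condExp.bdd_mul ((hf_sm.mono hG).aestronglyMeasurable)
        (Filter.Eventually.of_forall hf_bound)
    have h_fξ_int : Integrable (fun ω => f ω * ξ ω) μ :=
      hξ_int.bdd_mul ((hf_sm.mono hG).aestronglyMeasurable)
        (Filter.Eventually.of_forall hf_bound)
    have h_pull : μ[f * ξ|G] =ᵐ[μ] f * μ[ξ|G] :=
      condExp_stronglyMeasurable_mul_of_bound hG hf_sm hξ_int ((K:ℝ) ^ (m + 1))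
        (Filter.Eventually.of_forall hf_bound)
    have h_int_eq : (∫ ω, f ω * ξ ω ∂μ) = ∫ ω, f ω * η ω ∂μ := by
      have h1 : (∫ ω, f ω * ξ ω ∂μ) = ∫ ω, (μ[f * ξ|G]) ω ∂μ :=
        (integral_condExp hG).symm
      rw [h1, integral_congr_ae h_pull]
      rfl
    -- pointwise : (min |η| K)^(m+2) ≤ f * η
    have hpt1 : ∀ ω, (min |η ω| (K:ℝ)) ^ (m + 2) ≤ f ω * η ω := by
      intro ω
      have h1 : (min |η ω| (K:ℝ)) ^ (m + 2) = |t ω| ^ m * t ω ^ 2 := by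
        rw [← habs, ← sq_abs, ← pow_add]
      have h2 : f ω * η ω = |t ω| ^ m * (t ω * η ω) := by rw [hf_def]; ring
      rw [h1, h2]
      exact mul_le_mul_of_nonneg_left (hsq ω) (by positivity)
    -- pointwise Young
    have hpt2 : ∀ ω, f ω * ξ ω ≤
        ((m:ℝ) + 1) / ((m:ℝ) + 2) * (min |η ω| (K:ℝ)) ^ (m + 2)
          + 1 / ((m:ℝ) + 2) * |ξ ω| ^ (m + 2) := by
      intro ω
      have h1 : f ω * ξ ω ≤ |t ω| ^ (m + 1) * |ξ ω| := by
        calc f ω * ξ ω ≤ |f ω * ξ ω| := le_abs_self _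
          _ = |t ω| ^ (m + 1) * |ξ ω| := by rw [abs_mul, hf_abs]
      have h2 := young_nat (|t ω|) (|ξ ω|) (abs_nonneg _) (abs_nonneg _) (m + 1)
      push_cast at h2
      have hden : ((m:ℝ) + 1 + 1) = (m:ℝ) + 2 := by ring
      rw [hden] at h2
      rw [← habs]
      exact h1.trans h2
    -- integrate
    set A := ∫ ω, (min |η ω| (K:ℝ)) ^ (m + 2) ∂μ with hA_def
    have step1 : A ≤ ∫ ω, f ω * η ω ∂μ := integral_mono (h_tn_int K) h_fη_int hpt1
    have step2 : (∫ ω, f ω * ξ ω ∂μ)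
        ≤ ((m:ℝ) + 1) / ((m:ℝ) + 2) * A + 1 / ((m:ℝ) + 2) * B := by
      calc (∫ ω, f ω * ξ ω ∂μ)
          ≤ ∫ ω, (((m:ℝ) + 1) / ((m:ℝ) + 2) * (min |η ω| (K:ℝ)) ^ (m + 2)
              + 1 / ((m:ℝ) + 2) * |ξ ω| ^ (m + 2)) ∂μ :=
            integral_mono h_fξ_int (((h_tn_int K).const_mul _).add (hξn_int.const_mul _)) hpt2
        _ = ((m:ℝ) + 1) / ((m:ℝ) + 2) * A + 1 / ((m:ℝ) + 2) * B := by
            rw [integral_add ((h_tn_int K).const_mul _) (hξn_int.const_mul _),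
              integral_const_mul, integral_const_mul]
    have hfinal : A ≤ ((m:ℝ) + 1) / ((m:ℝ) + 2) * A + 1 / ((m:ℝ) + 2) * B := by
      calc A ≤ ∫ ω, f ω * η ω ∂μ := step1
        _ = ∫ ω, f ω * ξ ω ∂μ := h_int_eq.symm
        _ ≤ _ := step2
    have hd : (0:ℝ) < (m:ℝ) + 2 := by positivity
    have e1 : ((m:ℝ) + 1) / ((m:ℝ) + 2) * A + 1 / ((m:ℝ) + 2) * B
        = A - (A - B) / ((m:ℝ) + 2) := by field_simp; ring
    rw [e1] at hfinal
    by_contra hc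
    push_neg at hc
    have : 0 < (A - B) / ((m:ℝ) + 2) := div_pos (by linarith) hd
    linarith
  -- step 2 : monotone convergence
  have hsup : ∀ ω, (⨆ K : ℕ, ENNReal.ofReal ((min |η ω| (K:ℝ)) ^ (m + 2)))
      = ENNReal.ofReal (|η ω| ^ (m + 2)) := by
    intro ω
    apply le_antisymm
    · exact iSup_le fun K => ENNReal.ofReal_le_ofReal
        (pow_le_pow_left₀ (le_min (abs_nonneg _) (Nat.cast_nonneg _)) (min_le_left _ _) _)
    · exact le_iSup_of_le ⌈|η ω|⌉₊ (by rw [min_eq_left (Nat.le_ceil _)])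
  have hmeasF : ∀ K : ℕ, Measurable[m0] fun ω => ENNReal.ofReal ((min |η ω| (K:ℝ)) ^ (m + 2)) :=
    fun K => (hmin_meas K).ennreal_ofReal
  have hmonoF : Monotone fun (K : ℕ) (ω : Ω) => ENNReal.ofReal ((min |η ω| (K:ℝ)) ^ (m + 2)) := by
    intro K K' hKK' ω
    exact ENNReal.ofReal_le_ofReal (pow_le_pow_left₀ (le_min (abs_nonneg _) (Nat.cast_nonneg _))
      (min_le_min le_rfl (Nat.cast_le.mpr hKK')) _)
  have htotal : (∫⁻ ω, ENNReal.ofReal (|η ω| ^ (m + 2)) ∂μ) ≤ ENNReal.ofReal B := by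
    calc (∫⁻ ω, ENNReal.ofReal (|η ω| ^ (m + 2)) ∂μ)
        = ∫⁻ ω, ⨆ K : ℕ, ENNReal.ofReal ((min |η ω| (K:ℝ)) ^ (m + 2)) ∂μ :=
          lintegral_congr fun ω => (hsup ω).symm
      _ = ⨆ K : ℕ, ∫⁻ ω, ENNReal.ofReal ((min |η ω| (K:ℝ)) ^ (m + 2)) ∂μ :=
          lintegral_iSup hmeasF hmonoF
      _ ≤ ENNReal.ofReal B := by
          refine iSup_le fun K => ?_
          rw [← ofReal_integral_eq_lintegral_ofReal (h_tn_int K)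
            (Filter.Eventually.of_forall fun ω => by positivity)]
          exact ENNReal.ofReal_le_ofReal (key K)
  constructor
  · refine ⟨(hη_sm.mono hG).aestronglyMeasurable, ?_⟩
    rw [eLpNorm_eq_lintegral_rpow_enorm_toReal
      (by simp : ((m + 2 : ℕ) : ℝ≥0∞) ≠ 0)
      (ENNReal.natCast_ne_top (m + 2))]
    have hconv : (∫⁻ ω, ‖η ω‖ₑ ^ (((m + 2 : ℕ) : ℝ≥0∞)).toReal ∂μ)
        = ∫⁻ ω, ENNReal.ofReal (|η ω| ^ (m + 2)) ∂μ := by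
      refine lintegral_congr fun ω => ?_
      rw [ENNReal.toReal_natCast, ENNReal.rpow_natCast,
        Real.enorm_eq_ofReal_abs, ← ENNReal.ofReal_pow (abs_nonneg _)]
    rw [hconv]
    exact ENNReal.rpow_lt_top_of_nonneg (by positivity)
      (ne_top_of_le_ne_top ENNReal.ofReal_ne_top htotal)
  · have hnn : 0 ≤ᵐ[μ] fun ω => |η ω| ^ (m + 2) :=
      Filter.Eventually.of_forall fun ω => by positivity
    have hms : AEStronglyMeasurable[m0] (fun ω => |η ω| ^ (m + 2)) μ :=
      (meas_abs_pow hη_meas (m + 2)).aestronglyMeasurable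
    rw [integral_eq_lintegral_of_nonneg_ae hnn hms]
    calc (∫⁻ ω, ENNReal.ofReal (|η ω| ^ (m + 2)) ∂μ).toReal
        ≤ (ENNReal.ofReal B).toReal :=
          ENNReal.toReal_mono ENNReal.ofReal_ne_top htotal
      _ = B := ENNReal.toReal_ofReal hB0

/-- For a centered `H`-measurable `ξ` with all moments finite,
`E[|E[ξ|G]|^w] ≤ ρ·(E[ξ²])^{1/2}·(E[|E[ξ|G]|^{2(w−1)}])^{1/2}` and consequently
`E[|E[ξ|G]|^w] ≤ ρ·(E[ξ²])^{1/2}·(E[|ξ|^{2(w−1)}])^{1/2}`, for every `w ≥ 2`. -/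
theorem stmt_7 {Ω : Type*} {m0 : MeasurableSpace Ω} (μ : Measure Ω)
    [IsProbabilityMeasure μ] (G H : MeasurableSpace Ω)
    (hG : G ≤ m0) (hH : H ≤ m0) (ρ : ℝ) (hρ : 0 ≤ ρ)
    (hmix : mixingCoefLE μ G H ρ)
    (ξ : Ω → ℝ) (hξm : StronglyMeasurable[H] ξ)
    (hmom : ∀ r : ℕ, MemLp ξ r μ)
    (hξ0 : (∫ ω, ξ ω ∂μ) = 0) :
    ∀ w : ℕ, 2 ≤ w →
      (∫ ω, |(μ[ξ | G]) ω| ^ w ∂μ)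
          ≤ ρ * Real.sqrt (∫ ω, ξ ω ^ 2 ∂μ) *
              Real.sqrt (∫ ω, |(μ[ξ | G]) ω| ^ (2 * (w - 1)) ∂μ)
      ∧ (∫ ω, |(μ[ξ | G]) ω| ^ w ∂μ)
          ≤ ρ * Real.sqrt (∫ ω, ξ ω ^ 2 ∂μ) *
              Real.sqrt (∫ ω, |ξ ω| ^ (2 * (w - 1)) ∂μ) := by
  intro w hw
  obtain ⟨k, rfl⟩ : ∃ k, w = k + 2 := ⟨w - 2, by omega⟩
  have hw1 : k + 2 - 1 = k + 1 := rfl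
  rw [hw1]
  haveI : IsFiniteMeasure (μ.trim hG) := isFiniteMeasure_trim hG
  set η := μ[ξ|G] with hη_def
  have hη_sm : StronglyMeasurable[G] η := stronglyMeasurable_condExp
  have hη_meas : Measurable[G] η := hη_sm.measurable
  have hξ_int : Integrable ξ μ := memLp_one_iff_integrable.mp (by simpa using hmom 1)
  obtain ⟨hη2k, hbound2⟩ := condexp_pow_le μ G hG ξ hmom (2 * (k + 1)) (by omega)
  -- integrability facts
  have hη2k_int : Integrable (fun ω => |η ω| ^ (2 * (k + 1))) μ :=
    integrable_abs_pow_of_memℒp (by omega) hη2k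
  -- the multiplier g
  set g : Ω → ℝ := fun ω => η ω * |η ω| ^ k with hg_def
  have hg_sm : StronglyMeasurable[G] g :=
    (meas_mul_abs_pow hη_meas k).stronglyMeasurable
  have hg2 : ∀ ω, g ω ^ 2 = |η ω| ^ (2 * (k + 1)) := by
    intro ω
    calc (η ω * |η ω| ^ k) ^ 2 = η ω ^ 2 * (|η ω| ^ k) ^ 2 := mul_pow _ _ _
      _ = |η ω| ^ 2 * |η ω| ^ (k * 2) := by rw [sq_abs, ← pow_mul]
      _ = |η ω| ^ (2 * (k + 1)) := by rw [← pow_add]; congr 1; ring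
  have hgη : ∀ ω, g ω * η ω = |η ω| ^ (k + 2) := by
    intro ω
    calc g ω * η ω = η ω ^ 2 * |η ω| ^ k := by rw [hg_def]; ring
      _ = |η ω| ^ 2 * |η ω| ^ k := by rw [sq_abs]
      _ = |η ω| ^ (k + 2) := by rw [← pow_add]; congr 1; ring
  have hgsq_int : Integrable (fun ω => g ω ^ 2) μ :=
    hη2k_int.congr (Filter.Eventually.of_forall fun ω => (hg2 ω).symm)
  have hg_L2 : MemLp g 2 μ :=
    (memLp_two_iff_integrable_sq ((hg_sm.mono hG).aestronglyMeasurable)).2 hgsq_int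
  have hg_int : Integrable g μ := hg_L2.integrable (by norm_num)
  have hξ2 : MemLp ξ 2 μ := by simpa using hmom 2
  have hξsq_int : Integrable (fun ω => ξ ω ^ 2) μ :=
    (memLp_two_iff_integrable_sq hξ2.aestronglyMeasurable).1 hξ2
  -- centered version
  set c : ℝ := ∫ ω, g ω ∂μ with hc_def
  set U : Ω → ℝ := fun ω => g ω - c with hU_def
  have hU_sm : StronglyMeasurable[G] U := hg_sm.sub stronglyMeasurable_const
  have hU_L2 : MemLp U 2 μ := hg_L2.sub (memLp_const c)
  have hU0 : (∫ ω, U ω ∂μ) = 0 := by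
    rw [hU_def]
    rw [integral_sub hg_int (integrable_const c), integral_const]
    simp [← hc_def]
  -- products
  have hgξ_int : Integrable (fun ω => g ω * ξ ω) μ := integrable_mul_of_memℒp_two hg_L2 hξ2
  have hUξ_int : Integrable (fun ω => U ω * ξ ω) μ := integrable_mul_of_memℒp_two hU_L2 hξ2
  have hUξ_eq : (∫ ω, U ω * ξ ω ∂μ) = ∫ ω, g ω * ξ ω ∂μ := by
    have : ∀ ω, U ω * ξ ω = g ω * ξ ω - c * ξ ω := by intro ω; rw [hU_def]; ring
    rw [integral_congr_ae (Filter.Eventually.of_forall this),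
      integral_sub hgξ_int (hξ_int.const_mul c), integral_const_mul, hξ0, mul_zero, sub_zero]
  -- pull-out property of conditional expectation
  have h_pull : μ[g * ξ|G] =ᵐ[μ] g * μ[ξ|G] :=
    condExp_mul_of_stronglyMeasurable_left hg_sm hgξ_int hξ_int
  have hgξ_eq : (∫ ω, g ω * ξ ω ∂μ) = ∫ ω, |η ω| ^ (k + 2) ∂μ := by
    have h1 : (∫ ω, g ω * ξ ω ∂μ) = ∫ ω, (μ[g * ξ|G]) ω ∂μ := (integral_condExp hG).symm
    rw [h1, integral_congr_ae h_pull]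
    exact integral_congr_ae (Filter.Eventually.of_forall fun ω => hgη ω)
  -- variance bound
  have hUsq_int : Integrable (fun ω => U ω ^ 2) μ :=
    (memLp_two_iff_integrable_sq hU_L2.aestronglyMeasurable).1 hU_L2
  have hU2_le : (∫ ω, U ω ^ 2 ∂μ) ≤ ∫ ω, |η ω| ^ (2 * (k + 1)) ∂μ := by
    have hexp : ∀ ω, U ω ^ 2 = g ω ^ 2 - (2 * c) * g ω + c ^ 2 := by
      intro ω; rw [hU_def]; ring
    rw [integral_congr_ae (Filter.Eventually.of_forall hexp)]
    have hsub_int : Integrable (fun ω => g ω ^ 2 - 2 * c * g ω) μ :=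
      hgsq_int.sub (hg_int.const_mul (2 * c))
    rw [integral_add hsub_int (integrable_const _),
      integral_sub hgsq_int (hg_int.const_mul (2 * c)), integral_const_mul, integral_const]
    have hgsq_eq : (∫ ω, g ω ^ 2 ∂μ) = ∫ ω, |η ω| ^ (2 * (k + 1)) ∂μ :=
      integral_congr_ae (Filter.Eventually.of_forall fun ω => hg2 ω)
    rw [hgsq_eq, ← hc_def]
    simp only [measureReal_def, measure_univ, ENNReal.toReal_one, smul_eq_mul, one_mul]
    nlinarith [sq_nonneg c]
  -- apply mixing
  have hmixb := mix_bound hρ hmix U ξ hU_sm hξm hU_L2 hξ2 hU0 hξ0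
  have hUnn : (0:ℝ) ≤ ∫ ω, U ω ^ 2 ∂μ := integral_nonneg fun ω => sq_nonneg _
  have hLHS : (∫ ω, |η ω| ^ (k + 2) ∂μ)
      ≤ ρ * Real.sqrt (∫ ω, ξ ω ^ 2 ∂μ) * Real.sqrt (∫ ω, |η ω| ^ (2 * (k + 1)) ∂μ) := by
    calc (∫ ω, |η ω| ^ (k + 2) ∂μ) = ∫ ω, U ω * ξ ω ∂μ := by rw [hUξ_eq, hgξ_eq]
      _ ≤ |∫ ω, U ω * ξ ω ∂μ| := le_abs_self _
      _ ≤ ρ * Real.sqrt (∫ ω, U ω ^ 2 ∂μ) * Real.sqrt (∫ ω, ξ ω ^ 2 ∂μ) := hmixb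
      _ ≤ ρ * Real.sqrt (∫ ω, |η ω| ^ (2 * (k + 1)) ∂μ) * Real.sqrt (∫ ω, ξ ω ^ 2 ∂μ) := by
          apply mul_le_mul_of_nonneg_right _ (Real.sqrt_nonneg _)
          exact mul_le_mul_of_nonneg_left (Real.sqrt_le_sqrt hU2_le) hρ
      _ = ρ * Real.sqrt (∫ ω, ξ ω ^ 2 ∂μ) * Real.sqrt (∫ ω, |η ω| ^ (2 * (k + 1)) ∂μ) := by
          ring
  refine ⟨hLHS, hLHS.trans ?_⟩
  apply mul_le_mul_of_nonneg_left (Real.sqrt_le_sqrt hbound2)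
  positivity
end

section
/- Let 𝓐, 𝓑_1, 𝓑_2, 𝓒 be sub-σ-algebras of 𝓕 such that the pair (𝓑_1, 𝓑_2) has mixing coefficient at most ρ_j and the pair (𝓐, 𝓒) has mixing coefficient at most ρ_k. Let ξ be 𝓑_1-measurable and ζ be 𝓑_2-measurable, both with finite fourth moments, and suppose the product ξζ is 𝓒-measurable. Then: (i) |E[ξζ] − E[ξ]E[ζ]| ≤ ρ_j·(E[ξ²])^{1/2}·(E[ζ²])^{1/2}; and (ii) there exists a nonnegative 𝓐-measurable random variable Ψ with (E[Ψ²])^{1/2} ≤ ρ_k·(E[ξ⁴])^{1/4}·(E[ζ⁴])^{1/4} such that |E[ξζ | 𝓐]| ≤ |E[ξ]E[ζ]| + ρ_j·(E[ξ²])^{1/2}·(E[ζ²])^{1/2} + Ψ almost surely. (This is the conditional covariance bound of part (c) of the paper's lemma on ρ-mixing conditional moments.) -/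
open MeasureTheory
open scoped ENNReal

section Helpers

variable {Ω : Type*} {m0 : MeasurableSpace Ω} {μ : Measure Ω}

private lemma helper_half : (1:ℝ≥0∞)/2 = 1/4 + 1/4 := by
  rw [ENNReal.div_add_div_same, show ((1:ℝ≥0∞)+1) = 2 from one_add_one_eq_two,
    show (4:ℝ≥0∞) = 2*2 from by norm_num,
    ENNReal.div_eq_div_iff (by norm_num) (by norm_num) (by norm_num) (by norm_num)]
  ring

private lemma helper_integrable_mul [IsFiniteMeasure μ] {u v : Ω → ℝ}
    (hu : MemLp u 2 μ) (hv : MemLp v 2 μ) :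
    Integrable (fun ω => u ω * v ω) μ := by
  have h : MemLp (u • v) 1 μ := hv.smul hu (hpqr := ENNReal.HolderTriple.mk (by rw [inv_one, ENNReal.inv_two_add_inv_two] : (2:ℝ≥0∞)⁻¹ + 2⁻¹ = 1⁻¹))
  exact memLp_one_iff_integrable.mp h

private lemma helper_integrable_sq [IsFiniteMeasure μ] {u : Ω → ℝ} (hu : MemLp u 2 μ) :
    Integrable (fun ω => u ω ^ 2) μ := by
  simpa [pow_two] using helper_integrable_mul hu hu

private lemma helper_memL2_condexp [IsFiniteMeasure μ] {m : MeasurableSpace Ω} (hm : m ≤ m0)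
    {f : Ω → ℝ} (hf : MemLp f 2 μ) : MemLp (μ[f|m]) 2 μ := by
  have hg : MemLp (condExpL2 ℝ ℝ hm (hf.toLp f) : Ω → ℝ) 2 μ := Lp.memLp _
  have heq : (condExpL2 ℝ ℝ hm (hf.toLp f) : Ω → ℝ) =ᵐ[μ] μ[f|m] := by
    refine ae_eq_condExp_of_forall_setIntegral_eq hm (hf.integrable one_le_two)
      (fun s _ _ => (integrable_condExpL2_of_isFiniteMeasure hm).restrict)
      (fun s hs hμs => ?_) (aestronglyMeasurable_condExpL2 hm _)
    rw [integral_condExpL2_eq hm (hf.toLp f) hs hμs.ne]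
    exact integral_congr_ae (ae_restrict_of_ae hf.coeFn_toLp)
  exact hg.ae_eq heq

private lemma helper_mix_bound [IsProbabilityMeasure μ] {G H : MeasurableSpace Ω} {ρ : ℝ}
    (hρ : 0 ≤ ρ) (hmix : mixingCoefLE μ G H ρ) {U V : Ω → ℝ}
    (hU : StronglyMeasurable[G] U) (hV : StronglyMeasurable[H] V)
    (hU2 : MemLp U 2 μ) (hV2 : MemLp V 2 μ)
    (hUc : (∫ ω, U ω ∂μ) = 0) (hVc : (∫ ω, V ω ∂μ) = 0) :
    |∫ ω, U ω * V ω ∂μ| ≤ ρ * Real.sqrt (∫ ω, U ω ^ 2 ∂μ) * Real.sqrt (∫ ω, V ω ^ 2 ∂μ) := by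
  have ha0 : 0 ≤ ∫ ω, U ω ^ 2 ∂μ := integral_nonneg fun ω => sq_nonneg _
  have hb0 : 0 ≤ ∫ ω, V ω ^ 2 ∂μ := integral_nonneg fun ω => sq_nonneg _
  rcases ha0.eq_or_lt with h | hapos
  · have hz : (fun ω => U ω ^ 2) =ᵐ[μ] 0 :=
      (integral_eq_zero_iff_of_nonneg (fun ω => sq_nonneg _) (helper_integrable_sq hU2)).mp h.symm
    have hUV : (fun ω => U ω * V ω) =ᵐ[μ] 0 := by
      filter_upwards [hz] with ω hω
      have hU0 : U ω = 0 := by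
        have h2 : U ω ^ 2 = 0 := hω
        exact pow_eq_zero_iff two_ne_zero |>.mp h2
      simp [hU0]
    rw [integral_congr_ae hUV]
    simp only [Pi.zero_apply, integral_zero, abs_zero]
    positivity
  rcases hb0.eq_or_lt with h | hbpos
  · have hz : (fun ω => V ω ^ 2) =ᵐ[μ] 0 :=
      (integral_eq_zero_iff_of_nonneg (fun ω => sq_nonneg _) (helper_integrable_sq hV2)).mp h.symm
    have hUV : (fun ω => U ω * V ω) =ᵐ[μ] 0 := by
      filter_upwards [hz] with ω hω
      have hV0 : V ω = 0 := by
        have h2 : V ω ^ 2 = 0 := hω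
        exact pow_eq_zero_iff two_ne_zero |>.mp h2
      simp [hV0]
    rw [integral_congr_ae hUV]
    simp only [Pi.zero_apply, integral_zero, abs_zero]
    positivity
  set sa := Real.sqrt (∫ ω, U ω ^ 2 ∂μ) with hsa
  set sb := Real.sqrt (∫ ω, V ω ^ 2 ∂μ) with hsb
  have hsapos : 0 < sa := Real.sqrt_pos.mpr hapos
  have hsbpos : 0 < sb := Real.sqrt_pos.mpr hbpos
  have hsa2 : sa ^ 2 = ∫ ω, U ω ^ 2 ∂μ := Real.sq_sqrt ha0
  have hsb2 : sb ^ 2 = ∫ ω, V ω ^ 2 ∂μ := Real.sq_sqrt hb0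
  have key := hmix (fun ω => sa⁻¹ * U ω) (fun ω => sb⁻¹ * V ω)
    (hU.const_mul _) (hV.const_mul _) (hU2.const_mul _) (hV2.const_mul _)
    (by rw [integral_const_mul, hUc, mul_zero])
    (by rw [integral_const_mul, hVc, mul_zero])
    (by
      have h1 : ∀ ω, (sa⁻¹ * U ω) ^ 2 = sa⁻¹ ^ 2 * U ω ^ 2 := fun ω => by ring
      simp_rw [h1]
      rw [integral_const_mul, ← hsa2, inv_pow, inv_mul_cancel₀ (by positivity)])
    (by
      have h1 : ∀ ω, (sb⁻¹ * V ω) ^ 2 = sb⁻¹ ^ 2 * V ω ^ 2 := fun ω => by ring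
      simp_rw [h1]
      rw [integral_const_mul, ← hsb2, inv_pow, inv_mul_cancel₀ (by positivity)])
  have hrw : ∀ ω, sa⁻¹ * U ω * (sb⁻¹ * V ω) = sa⁻¹ * sb⁻¹ * (U ω * V ω) := fun ω => by ring
  simp_rw [hrw] at key
  rw [integral_const_mul, abs_mul, abs_of_nonneg (by positivity : (0:ℝ) ≤ sa⁻¹ * sb⁻¹)] at key
  calc |∫ ω, U ω * V ω ∂μ| = sa * sb * (sa⁻¹ * sb⁻¹ * |∫ ω, U ω * V ω ∂μ|) := by
        field_simp
    _ ≤ sa * sb * ρ := by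
        apply mul_le_mul_of_nonneg_left key (by positivity)
    _ = ρ * sa * sb := by ring

end Helpers

/-- Covariance and conditional covariance bounds under
ρ-mixing (part (c) of the paper's lemma on ρ-mixing conditional moments). -/
theorem stmt_10 {Ω : Type*} {m0 : MeasurableSpace Ω} (μ : Measure Ω)
    [IsProbabilityMeasure μ]
    (𝓐 𝓑₁ 𝓑₂ 𝓒 : MeasurableSpace Ω)
    (h𝓐 : 𝓐 ≤ m0) (h𝓑₁ : 𝓑₁ ≤ m0) (h𝓑₂ : 𝓑₂ ≤ m0) (h𝓒 : 𝓒 ≤ m0)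
    (ρj ρk : ℝ) (hρj : 0 ≤ ρj) (hρk : 0 ≤ ρk)
    (hmixB : mixingCoefLE μ 𝓑₁ 𝓑₂ ρj)
    (hmixAC : mixingCoefLE μ 𝓐 𝓒 ρk)
    (ξ ζ : Ω → ℝ)
    (hξm : StronglyMeasurable[𝓑₁] ξ) (hζm : StronglyMeasurable[𝓑₂] ζ)
    (hξ4 : MemLp ξ 4 μ) (hζ4 : MemLp ζ 4 μ)
    (hprod : StronglyMeasurable[𝓒] (fun ω => ξ ω * ζ ω)) :
    |(∫ ω, ξ ω * ζ ω ∂μ) - (∫ ω, ξ ω ∂μ) * (∫ ω, ζ ω ∂μ)|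
        ≤ ρj * Real.sqrt (∫ ω, ξ ω ^ 2 ∂μ) * Real.sqrt (∫ ω, ζ ω ^ 2 ∂μ)
    ∧ ∃ Ψ : Ω → ℝ, StronglyMeasurable[𝓐] Ψ ∧ (∀ ω, 0 ≤ Ψ ω) ∧
        Real.sqrt (∫ ω, Ψ ω ^ 2 ∂μ)
            ≤ ρk * (∫ ω, ξ ω ^ 4 ∂μ) ^ ((1:ℝ)/4) * (∫ ω, ζ ω ^ 4 ∂μ) ^ ((1:ℝ)/4)
        ∧ ∀ᵐ ω ∂μ,
            |(μ[fun ω' => ξ ω' * ζ ω' | 𝓐]) ω|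
              ≤ |(∫ ω', ξ ω' ∂μ) * (∫ ω', ζ ω' ∂μ)|
                + ρj * Real.sqrt (∫ ω', ξ ω' ^ 2 ∂μ) *
                    Real.sqrt (∫ ω', ζ ω' ^ 2 ∂μ)
                + Ψ ω := by
  have hξ2 : MemLp ξ 2 μ := hξ4.mono_exponent (by norm_num)
  have hζ2 : MemLp ζ 2 μ := hζ4.mono_exponent (by norm_num)
  have hξi : Integrable ξ μ := hξ2.integrable one_le_two
  have hζi : Integrable ζ μ := hζ2.integrable one_le_two
  set a := ∫ ω, ξ ω ∂μ with ha
  set b := ∫ ω, ζ ω ∂μ with hb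
  set f : Ω → ℝ := fun ω => ξ ω * ζ ω with hf
  have hf2 : MemLp f 2 μ := hζ4.smul hξ4 (hpqr := ENNReal.HolderTriple.mk (by simpa [one_div] using helper_half.symm : (4:ℝ≥0∞)⁻¹ + 4⁻¹ = 2⁻¹))
  have hfi : Integrable f μ := hf2.integrable one_le_two
  set c := ∫ ω, f ω ∂μ with hc
  -- variance bound helper
  have hvar : ∀ (u : Ω → ℝ), MemLp u 2 μ →
      ∫ ω, (u ω - ∫ ω', u ω' ∂μ) ^ 2 ∂μ ≤ ∫ ω, u ω ^ 2 ∂μ := by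
    intro u hu
    set d := ∫ ω', u ω' ∂μ with hd
    have hui : Integrable u μ := hu.integrable one_le_two
    have husq : Integrable (fun ω => u ω ^ 2) μ := helper_integrable_sq hu
    have h1 : Integrable (fun ω => u ω ^ 2 - 2 * d * u ω) μ := husq.sub (hui.const_mul _)
    have hexp : ∀ ω, (u ω - d) ^ 2 = u ω ^ 2 - 2 * d * u ω + d ^ 2 := fun ω => by ring
    simp_rw [hexp]
    rw [integral_add h1 (integrable_const _),
      integral_sub husq (hui.const_mul _), integral_const_mul, integral_const]
    simp only [measure_univ, probReal_univ, ENNReal.toReal_one, smul_eq_mul, one_mul, ← hd]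
    nlinarith [sq_nonneg d]
  -- centering integrals
  have hcen : ∀ (u : Ω → ℝ), Integrable u μ →
      ∫ ω, (u ω - ∫ ω', u ω' ∂μ) ∂μ = 0 := by
    intro u hui
    rw [integral_sub hui (integrable_const _), integral_const]
    simp [measure_univ]
  -- Part (i)
  have hpart1 : |c - a * b| ≤ ρj * Real.sqrt (∫ ω, ξ ω ^ 2 ∂μ) * Real.sqrt (∫ ω, ζ ω ^ 2 ∂μ) := by
    have hmb := helper_mix_bound (U := fun ω => ξ ω - a) (V := fun ω => ζ ω - b) hρj hmixB
      (hξm.sub stronglyMeasurable_const) (hζm.sub stronglyMeasurable_const)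
      (hξ2.sub (memLp_const a)) (hζ2.sub (memLp_const b))
      (hcen ξ hξi) (hcen ζ hζi)
    have hI : ∫ ω, (ξ ω - a) * (ζ ω - b) ∂μ = c - a * b := by
      have h1 : Integrable (fun ω => f ω - b * ξ ω) μ := hfi.sub (hξi.const_mul _)
      have h2 : Integrable (fun ω => f ω - b * ξ ω - a * ζ ω) μ := h1.sub (hζi.const_mul _)
      have hexp : ∀ ω, (ξ ω - a) * (ζ ω - b) = f ω - b * ξ ω - a * ζ ω + a * b := fun ω => by
        simp only [hf]; ring
      simp_rw [hexp]
      rw [integral_add h2 (integrable_const _), integral_sub h1 (hζi.const_mul _),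
        integral_sub hfi (hξi.const_mul _), integral_const_mul, integral_const_mul, integral_const]
      simp only [measure_univ, probReal_univ, ENNReal.toReal_one, smul_eq_mul, one_mul, ← ha, ← hb, ← hc]
      ring
    rw [hI] at hmb
    refine hmb.trans ?_
    have h1 : Real.sqrt (∫ ω, (ξ ω - a) ^ 2 ∂μ) ≤ Real.sqrt (∫ ω, ξ ω ^ 2 ∂μ) :=
      Real.sqrt_le_sqrt (hvar ξ hξ2)
    have h2 : Real.sqrt (∫ ω, (ζ ω - b) ^ 2 ∂μ) ≤ Real.sqrt (∫ ω, ζ ω ^ 2 ∂μ) :=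
      Real.sqrt_le_sqrt (hvar ζ hζ2)
    have h3 := mul_le_mul (mul_le_mul_of_nonneg_left h1 hρj) h2 (Real.sqrt_nonneg _)
      (by positivity)
    linarith
  refine ⟨hpart1, ?_⟩
  -- Part (ii)
  set g : Ω → ℝ := μ[f|𝓐] with hg
  have hg2 : MemLp g 2 μ := helper_memL2_condexp h𝓐 hf2
  have hgi : Integrable g μ := hg2.integrable one_le_two
  set D : Ω → ℝ := fun ω => g ω - c with hD
  have hD2 : MemLp D 2 μ := hg2.sub (memLp_const c)
  have hDm : StronglyMeasurable[𝓐] D :=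
    (stronglyMeasurable_condExp (m := 𝓐)).sub stronglyMeasurable_const
  have hDi : Integrable D μ := hD2.integrable one_le_two
  have hgint : ∫ ω, g ω ∂μ = c := integral_condExp h𝓐
  have hDc : ∫ ω, D ω ∂μ = 0 := by
    have h1 := hcen g hgi
    rwa [hgint] at h1
  have hVm : StronglyMeasurable[𝓒] (fun ω => f ω - c) := hprod.sub stronglyMeasurable_const
  have hV2 : MemLp (fun ω => f ω - c) 2 μ := hf2.sub (memLp_const c)
  have hVc : ∫ ω, (f ω - c) ∂μ = 0 := hcen f hfi
  set A := ∫ ω, D ω ^ 2 ∂μ with hA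
  have hA0 : 0 ≤ A := integral_nonneg fun ω => sq_nonneg _
  have hADi : Integrable (fun ω => D ω ^ 2) μ := helper_integrable_sq hD2
  -- key identity: ∫ D * (f - c) = A
  have hkey : ∫ ω, D ω * (f ω - c) ∂μ = A := by
    have hDfi : Integrable (fun ω => D ω * f ω) μ := helper_integrable_mul hD2 hf2
    have h1 : ∫ ω, D ω * (f ω - c) ∂μ = ∫ ω, D ω * f ω ∂μ - c * ∫ ω, D ω ∂μ := by
      have hexp : ∀ ω, D ω * (f ω - c) = D ω * f ω - c * D ω := fun ω => by ring
      simp_rw [hexp]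
      rw [integral_sub hDfi (hDi.const_mul _), integral_const_mul]
    have hpull : μ[(fun ω => D ω * f ω)|𝓐] =ᵐ[μ] fun ω => D ω * g ω :=
      condExp_mul_of_stronglyMeasurable_left hDm hDfi hfi
    have h2 : ∫ ω, D ω * f ω ∂μ = ∫ ω, D ω * g ω ∂μ := by
      rw [← integral_condExp h𝓐 (f := fun ω => D ω * f ω)]
      exact integral_congr_ae hpull
    have h3 : ∫ ω, D ω * g ω ∂μ = A + c * ∫ ω, D ω ∂μ := by
      have hexp : ∀ ω, D ω * g ω = D ω ^ 2 + c * D ω := fun ω => by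
        simp only [hD]; ring
      simp_rw [hexp]
      rw [integral_add hADi (hDi.const_mul _), integral_const_mul]
    rw [h1, h2, h3, hDc]
    ring
  have hmbA := helper_mix_bound hρk hmixAC hDm hVm hD2 hV2 hDc hVc
  rw [hkey] at hmbA
  have hAle : A ≤ ρk * Real.sqrt A * Real.sqrt (∫ ω, (f ω - c) ^ 2 ∂μ) :=
    (le_abs_self A).trans hmbA
  set B := ∫ ω, (f ω - c) ^ 2 ∂μ with hB
  have hB0 : 0 ≤ B := integral_nonneg fun ω => sq_nonneg _
  have hsqrtA : Real.sqrt A ≤ ρk * Real.sqrt B := by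
    rcases hA0.eq_or_lt with h | hApos
    · rw [← h, Real.sqrt_zero]
      positivity
    · have hsApos : 0 < Real.sqrt A := Real.sqrt_pos.mpr hApos
      have h4 : Real.sqrt A * Real.sqrt A ≤ (ρk * Real.sqrt B) * Real.sqrt A := by
        rw [Real.mul_self_sqrt hA0]
        calc A ≤ ρk * Real.sqrt A * Real.sqrt B := hAle
          _ = ρk * Real.sqrt B * Real.sqrt A := by ring
      exact le_of_mul_le_mul_right h4 hsApos
  -- bound B by fourth moments
  have hBf : B ≤ ∫ ω, f ω ^ 2 ∂μ := hvar f hf2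
  have hξsq2 : MemLp (fun ω => ξ ω ^ 2) 2 μ := by
    have h := hξ4.smul hξ4 (hpqr := ENNReal.HolderTriple.mk (by simpa [one_div] using helper_half.symm : (4:ℝ≥0∞)⁻¹ + 4⁻¹ = 2⁻¹))
    simpa [pow_two, Pi.mul_def] using h
  have hζsq2 : MemLp (fun ω => ζ ω ^ 2) 2 μ := by
    have h := hζ4.smul hζ4 (hpqr := ENNReal.HolderTriple.mk (by simpa [one_div] using helper_half.symm : (4:ℝ≥0∞)⁻¹ + 4⁻¹ = 2⁻¹))
    simpa [pow_two, Pi.mul_def] using h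
  have hconj : Real.HolderConjugate 2 2 := ⟨by norm_num, by norm_num, by norm_num⟩
  have hCS := integral_mul_le_Lp_mul_Lq_of_nonneg hconj
    (f := fun ω => ξ ω ^ 2) (g := fun ω => ζ ω ^ 2)
    (Filter.Eventually.of_forall fun ω => sq_nonneg _)
    (Filter.Eventually.of_forall fun ω => sq_nonneg _)
    (by simpa using hξsq2) (by simpa using hζsq2)
  have hrpow2 : ∀ x : ℝ, (x ^ 2) ^ (2:ℝ) = x ^ 4 := by
    intro x
    rw [show (2:ℝ) = ((2:ℕ):ℝ) by norm_num, Real.rpow_natCast]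
    ring
  simp_rw [hrpow2] at hCS
  have hfsq : ∫ ω, f ω ^ 2 ∂μ = ∫ ω, ξ ω ^ 2 * ζ ω ^ 2 ∂μ := by
    congr 1
    funext ω
    simp only [hf]
    ring
  set P := (∫ ω, ξ ω ^ 4 ∂μ) ^ ((1:ℝ)/2) * (∫ ω, ζ ω ^ 4 ∂μ) ^ ((1:ℝ)/2) with hP
  have hξ40 : 0 ≤ ∫ ω, ξ ω ^ 4 ∂μ := integral_nonneg fun ω => by positivity
  have hζ40 : 0 ≤ ∫ ω, ζ ω ^ 4 ∂μ := integral_nonneg fun ω => by positivity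
  have hfP : ∫ ω, f ω ^ 2 ∂μ ≤ P := by rw [hfsq]; exact hCS
  have hsqrtP : Real.sqrt P = (∫ ω, ξ ω ^ 4 ∂μ) ^ ((1:ℝ)/4) * (∫ ω, ζ ω ^ 4 ∂μ) ^ ((1:ℝ)/4) := by
    rw [hP, Real.sqrt_mul (by positivity), Real.sqrt_eq_rpow, Real.sqrt_eq_rpow,
      ← Real.rpow_mul hξ40, ← Real.rpow_mul hζ40]
    norm_num
  have hsqrtB : Real.sqrt B ≤ (∫ ω, ξ ω ^ 4 ∂μ) ^ ((1:ℝ)/4) * (∫ ω, ζ ω ^ 4 ∂μ) ^ ((1:ℝ)/4) := by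
    rw [← hsqrtP]
    exact Real.sqrt_le_sqrt (hBf.trans hfP)
  -- define Ψ
  refine ⟨fun ω => |D ω|, continuous_abs.comp_stronglyMeasurable hDm,
    fun ω => abs_nonneg _, ?_, ?_⟩
  · have habs : ∫ ω, |D ω| ^ 2 ∂μ = A := by
      rw [hA]
      congr 1
      funext ω
      rw [sq_abs]
    rw [habs]
    calc Real.sqrt A ≤ ρk * Real.sqrt B := hsqrtA
      _ ≤ ρk * ((∫ ω, ξ ω ^ 4 ∂μ) ^ ((1:ℝ)/4) * (∫ ω, ζ ω ^ 4 ∂μ) ^ ((1:ℝ)/4)) :=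
          mul_le_mul_of_nonneg_left hsqrtB hρk
      _ = ρk * (∫ ω, ξ ω ^ 4 ∂μ) ^ ((1:ℝ)/4) * (∫ ω, ζ ω ^ 4 ∂μ) ^ ((1:ℝ)/4) := by ring
  · refine Filter.Eventually.of_forall fun ω => ?_
    have h1 : |g ω| ≤ |c| + |D ω| := by
      have h5 : g ω = c + D ω := by simp [hD]
      rw [h5]
      exact abs_add_le _ _
    have h2 : |c| ≤ |a * b| + ρj * Real.sqrt (∫ ω, ξ ω ^ 2 ∂μ) * Real.sqrt (∫ ω, ζ ω ^ 2 ∂μ) := by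
      have h6 : |c| ≤ |a * b| + |c - a * b| :=
        calc |c| = |a * b + (c - a * b)| := by ring_nf
          _ ≤ |a * b| + |c - a * b| := abs_add_le _ _
      linarith [hpart1]
    calc |g ω| ≤ |c| + |D ω| := h1
      _ ≤ |a * b| + ρj * Real.sqrt (∫ ω', ξ ω' ^ 2 ∂μ) * Real.sqrt (∫ ω', ζ ω' ^ 2 ∂μ) + |D ω| :=
          by linarith
end

section
/- For every r ≥ 1 there exists a constant C > 0, depending only on r, such that: for all real numbers x_1, x_2, y_1, y_2 and all positive reals u'_1 < u_1 < u''_1 and u'_2 < u_2 < u''_2 with u''_1 ≤ r·u'_1 and u''_2 ≤ r·u'_2, one has |(x_1 + y_1)(x_2 + y_2)·1_{|x_1 + y_1| ≤ u_1, |x_2 + y_2| ≤ u_2} − x_1·x_2| ≤ C·[ |x_1 x_2|·1_{|x_1| > u'_1/2, |x_2| ≤ u'_2/2} + |x_1 x_2|·1_{|x_2| > u'_2/2, |x_1| ≤ u'_1/2} + |x_1 x_2|·1_{|x_1| > u'_1/2, |x_2| > u'_2/2} + u''_1·|x_2|·min(|y_1|/u''_1, 1) + u''_2·|x_1|·min(|y_2|/u''_2,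 1) + u''_1·u''_2·min(|y_1|/u''_1, 1)·min(|y_2|/u''_2, 1) ]. -/
private lemma aux_le (x y u u'' : ℝ) (h : |x + y| ≤ u) (hle : u ≤ u'') :
    |y| ≤ min |y| u'' + |x| := by
  rcases le_total |y| u'' with hc | hc
  · rw [min_eq_left hc]; linarith [abs_nonneg x]
  · rw [min_eq_right hc]
    have h2 : |y| ≤ |x + y| + |x| := by
      calc |y| = |(x + y) - x| := by ring_nf
        _ ≤ |x + y| + |x| := abs_sub _ _
    linarith

private lemma aux_le' (x y u u' u'' : ℝ) (h : |x + y| ≤ u) (hle : u ≤ u'')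
    (hx : |x| ≤ u' / 2) (h' : u' ≤ u'') :
    |y| ≤ (3/2) * min |y| u'' := by
  rcases le_total |y| u'' with hc | hc
  · rw [min_eq_left hc]; linarith [abs_nonneg y]
  · rw [min_eq_right hc]
    have h2 : |y| ≤ |x + y| + |x| := by
      calc |y| = |(x + y) - x| := by ring_nf
        _ ≤ |x + y| + |x| := abs_sub _ _
    linarith

/-- The deterministic truncation inequality used in the
analysis of jump-truncated pre-averaged spot covariance estimators. -/
theorem stmt_12 :
    ∀ r : ℝ, 1 ≤ r → ∃ C > (0:ℝ),
      ∀ x1 x2 y1 y2 u1 u2 u1' u2' u1'' u2'' : ℝ,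
        0 < u1' → u1' < u1 → u1 < u1'' →
        0 < u2' → u2' < u2 → u2 < u2'' →
        u1'' ≤ r * u1' → u2'' ≤ r * u2' →
        |(x1 + y1) * (x2 + y2) *
              (if |x1 + y1| ≤ u1 ∧ |x2 + y2| ≤ u2 then (1:ℝ) else 0)
            - x1 * x2|
          ≤ C * (|x1 * x2| * (if u1' / 2 < |x1| ∧ |x2| ≤ u2' / 2 then (1:ℝ) else 0)
              + |x1 * x2| * (if u2' / 2 < |x2| ∧ |x1| ≤ u1' / 2 then (1:ℝ) else 0)
              + |x1 * x2| * (if u1' / 2 < |x1| ∧ u2' / 2 < |x2| then (1:ℝ) else 0)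
              + u1'' * |x2| * min (|y1| / u1'') 1
              + u2'' * |x1| * min (|y2| / u2'') 1
              + u1'' * u2'' * min (|y1| / u1'') 1 * min (|y2| / u2'') 1) := by
  intro r hr
  refine ⟨3, by norm_num, ?_⟩
  intro x1 x2 y1 y2 u1 u2 u1' u2' u1'' u2'' h1 h2 h3 h4 h5 h6 h7 h8
  have hu1 : (0:ℝ) < u1'' := by linarith
  have hu2 : (0:ℝ) < u2'' := by linarith
  set M1 := min |y1| u1'' with hM1
  set M2 := min |y2| u2'' with hM2
  have em1 : min (|y1| / u1'') 1 = M1 / u1'' := by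
    rw [show (1:ℝ) = u1'' / u1'' from (div_self hu1.ne').symm,
      min_div_div_right hu1.le]
  have em2 : min (|y2| / u2'') 1 = M2 / u2'' := by
    rw [show (1:ℝ) = u2'' / u2'' from (div_self hu2.ne').symm,
      min_div_div_right hu2.le]
  rw [em1, em2]
  have t1 : u1'' * |x2| * (M1 / u1'') = |x2| * M1 := by field_simp
  have t2 : u2'' * |x1| * (M2 / u2'') = |x1| * M2 := by field_simp
  have t3 : u1'' * u2'' * (M1 / u1'') * (M2 / u2'') = M1 * M2 := by field_simp
  rw [t1, t2, t3]
  have hM1n : (0:ℝ) ≤ M1 := le_min (abs_nonneg y1) hu1.le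
  have hM2n : (0:ℝ) ≤ M2 := le_min (abs_nonneg y2) hu2.le
  have hx1n := abs_nonneg x1
  have hx2n := abs_nonneg x2
  have p1 : (0:ℝ) ≤ |x2| * M1 := mul_nonneg hx2n hM1n
  have p2 : (0:ℝ) ≤ |x1| * M2 := mul_nonneg hx1n hM2n
  have p3 : (0:ℝ) ≤ M1 * M2 := mul_nonneg hM1n hM2n
  have p4 : (0:ℝ) ≤ |x1| * |x2| := mul_nonneg hx1n hx2n
  by_cases hT : |x1 + y1| ≤ u1 ∧ |x2 + y2| ≤ u2
  · -- truncation keeps the value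
    rw [if_pos hT, mul_one]
    have hL : |(x1 + y1) * (x2 + y2) - x1 * x2|
        ≤ |x1| * |y2| + |y1| * |x2| + |y1| * |y2| := by
      have e : (x1 + y1) * (x2 + y2) - x1 * x2 = x1 * y2 + y1 * x2 + y1 * y2 := by
        ring
      rw [e]
      calc |x1 * y2 + y1 * x2 + y1 * y2| ≤ |x1 * y2 + y1 * x2| + |y1 * y2| :=
            abs_add_le _ _
        _ ≤ |x1 * y2| + |y1 * x2| + |y1 * y2| := by
            linarith [abs_add_le (x1 * y2) (y1 * x2)]
        _ = |x1| * |y2| + |y1| * |x2| + |y1| * |y2| := by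
            rw [abs_mul, abs_mul, abs_mul]
    have F1 : |y1| ≤ M1 + |x1| := aux_le x1 y1 u1 u1'' hT.1 h3.le
    have F2 : |y2| ≤ M2 + |x2| := aux_le x2 y2 u2 u2'' hT.2 h6.le
    by_cases hP1 : u1' / 2 < |x1| <;> by_cases hP2 : u2' / 2 < |x2|
    · -- both big : third indicator active
      rw [if_neg (by rintro ⟨-, hh⟩; exact absurd hh (not_le.mpr hP2)),
        if_neg (by rintro ⟨-, hh⟩; exact absurd hh (not_le.mpr hP1)),
        if_pos ⟨hP1, hP2⟩, abs_mul]
      have k1 := mul_le_mul_of_nonneg_left F2 hx1n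
      have k2 := mul_le_mul_of_nonneg_right F1 hx2n
      have k3 := mul_le_mul F1 F2 (abs_nonneg y2) (by linarith)
      linarith [hL, k1, k2, k3, p1, p2, p3, p4]
    · -- x1 big, x2 small : first indicator active
      have hx2 : |x2| ≤ u2' / 2 := le_of_not_gt hP2
      have F2' : |y2| ≤ (3/2) * M2 := aux_le' x2 y2 u2 u2' u2'' hT.2 h6.le hx2 (by linarith)
      rw [if_pos ⟨hP1, hx2⟩,
        if_neg (by rintro ⟨hh, -⟩; exact absurd hh hP2),
        if_neg (by rintro ⟨-, hh⟩; exact absurd hh hP2), abs_mul]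
      have k1 := mul_le_mul_of_nonneg_left F2' hx1n
      have k2 := mul_le_mul_of_nonneg_right F1 hx2n
      have k3 := mul_le_mul F1 F2' (abs_nonneg y2) (by linarith)
      linarith [hL, k1, k2, k3, p1, p2, p3, p4]
    · -- x1 small, x2 big : second indicator active
      have hx1 : |x1| ≤ u1' / 2 := le_of_not_gt hP1
      have F1' : |y1| ≤ (3/2) * M1 := aux_le' x1 y1 u1 u1' u1'' hT.1 h3.le hx1 (by linarith)
      rw [if_neg (by rintro ⟨hh, -⟩; exact absurd hh hP1),
        if_pos ⟨hP2, hx1⟩,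
        if_neg (by rintro ⟨hh, -⟩; exact absurd hh hP1), abs_mul]
      have k1 := mul_le_mul_of_nonneg_left F2 hx1n
      have k2 := mul_le_mul_of_nonneg_right F1' hx2n
      have k3 := mul_le_mul F1' F2 (abs_nonneg y2) (by linarith)
      linarith [hL, k1, k2, k3, p1, p2, p3, p4]
    · -- both small : no indicator active
      have hx1 : |x1| ≤ u1' / 2 := le_of_not_gt hP1
      have hx2 : |x2| ≤ u2' / 2 := le_of_not_gt hP2
      have F1' : |y1| ≤ (3/2) * M1 := aux_le' x1 y1 u1 u1' u1'' hT.1 h3.le hx1 (by linarith)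
      have F2' : |y2| ≤ (3/2) * M2 := aux_le' x2 y2 u2 u2' u2'' hT.2 h6.le hx2 (by linarith)
      rw [if_neg (by rintro ⟨hh, -⟩; exact absurd hh hP1),
        if_neg (by rintro ⟨hh, -⟩; exact absurd hh hP2),
        if_neg (by rintro ⟨hh, -⟩; exact absurd hh hP1)]
      have k1 := mul_le_mul_of_nonneg_left F2' hx1n
      have k2 := mul_le_mul_of_nonneg_right F1' hx2n
      have k3 := mul_le_mul F1' F2' (abs_nonneg y2) (by linarith)
      linarith [hL, k1, k2, k3, p1, p2, p3, p4]
  · -- truncation kills the value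
    rw [if_neg hT, mul_zero, zero_sub, abs_neg, abs_mul]
    by_cases hP1 : u1' / 2 < |x1| <;> by_cases hP2 : u2' / 2 < |x2|
    · rw [if_neg (by rintro ⟨-, hh⟩; exact absurd hh (not_le.mpr hP2)),
        if_neg (by rintro ⟨-, hh⟩; exact absurd hh (not_le.mpr hP1)),
        if_pos ⟨hP1, hP2⟩]
      linarith [p1, p2, p3, p4]
    · rw [if_pos ⟨hP1, le_of_not_gt hP2⟩,
        if_neg (by rintro ⟨hh, -⟩; exact absurd hh hP2),
        if_neg (by rintro ⟨-, hh⟩; exact absurd hh hP2)]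
      linarith [p1, p2, p3, p4]
    · rw [if_neg (by rintro ⟨hh, -⟩; exact absurd hh hP1),
        if_pos ⟨hP2, le_of_not_gt hP1⟩,
        if_neg (by rintro ⟨hh, -⟩; exact absurd hh hP1)]
      linarith [p1, p2, p3, p4]
    · -- both small : one of the jumps must be large
      have hx1 : |x1| ≤ u1' / 2 := le_of_not_gt hP1
      have hx2 : |x2| ≤ u2' / 2 := le_of_not_gt hP2
      rw [if_neg (by rintro ⟨hh, -⟩; exact absurd hh hP1),
        if_neg (by rintro ⟨hh, -⟩; exact absurd hh hP2),
        if_neg (by rintro ⟨hh, -⟩; exact absurd hh hP1)]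
      rcases not_and_or.mp hT with h | h
      · push_neg at h
        have hy1 : u1' / 2 ≤ |y1| := by
          have := abs_add_le x1 y1
          linarith
        have hM : u1' / 2 ≤ M1 := le_min hy1 (by linarith)
        have : |x1| * |x2| ≤ M1 * |x2| :=
          mul_le_mul_of_nonneg_right (le_trans hx1 hM) hx2n
        linarith [p1, p2, p3, p4]
      · push_neg at h
        have hy2 : u2' / 2 ≤ |y2| := by
          have := abs_add_le x2 y2
          linarith
        have hM : u2' / 2 ≤ M2 := le_min hy2 (by linarith)
        have : |x1| * |x2| ≤ |x1| * M2 :=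
          mul_le_mul_of_nonneg_left (le_trans hx2 hM) hx1n
        linarith [p1, p2, p3, p4]
end
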